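/- arXiv:1405.1690 — 11 statements merged into one kernel-verified Lean document; each statement's English description precedes it below -/
import Mathlib

section
/- Let A be a bounded linear operator on a complex Hilbert space H and let M be a bounded normal operator on H that commutes with A (AM = MA). Then the norm of the self-commutator of A satisfies ‖A*A − AA*‖ ≤ ‖A + M‖². -/
open ContinuousLinearMap

open NormedSpace in
/-- **Fuglede's theorem** (Rosenblum's proof): if `m` is normal and `a` commutes with `m`,
then `a` commutes with `star m`. -/
lemma fuglede_commute {H : Type*} [NormedAddCommGroup H] [InnerProductSpace ℂ H]
    [CompleteSpace H] (a m : H →L[ℂ] H) (hm : star m * m = m * star m)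
    (ham : a * m = m * a) : a * star m = star m * a := by
  letI : NormedAlgebra ℚ (H →L[ℂ] H) := .restrictScalars ℚ ℂ (H →L[ℂ] H)
  set b : H →L[ℂ] H := star m with hb
  have hCam : Commute a m := ham
  have hCmb : Commute m b := hm.symm
  -- the function `g λ = exp(λ•b) * a * exp(-λ•b)`
  set g : ℂ → (H →L[ℂ] H) := fun z => exp (z • b) * a * exp ((-z) • b) with hg
  -- g is bounded by ‖a‖ : g z = u * a * star u with u unitary
  have hbound : ∀ z : ℂ, ‖g z‖ ≤ ‖a‖ := by
    intro z
    set c : ℂ := starRingEnd ℂ z with hc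
    set s : H →L[ℂ] H := z • b - c • m with hs
    have hs_skew : s ∈ skewAdjoint (H →L[ℂ] H) := by
      rw [skewAdjoint.mem_iff]
      simp only [hs, star_sub, star_smul, hb, star_star, RCLike.star_def]
      simp [hc, neg_sub]
    have hu : exp s ∈ unitary (H →L[ℂ] H) :=
      exp_mem_unitary_of_mem_skewAdjoint hs_skew
    have hstar_u : star (exp s) = exp (c • m - z • b) := by
      rw [star_exp]
      congr 1
      rw [skewAdjoint.mem_iff.mp hs_skew, hs, neg_sub]
    -- key identity : g z = exp s * a * star (exp s)
    have hkey : g z = exp s * a * star (exp s) := by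
      rw [hstar_u]
      have h1 : exp s = exp (z • b) * exp (-(c • m)) := by
        rw [hs, sub_eq_add_neg, exp_add_of_commute]
        exact ((hCmb.symm.smul_left z).smul_right c).neg_right
      have h2 : exp (c • m - z • b) = exp (c • m) * exp ((-z) • b) := by
        rw [sub_eq_add_neg, ← neg_smul, exp_add_of_commute]
        exact ((hCmb.smul_left c).smul_right (-z))
      have h3 : a * exp (c • m) = exp (c • m) * a :=
        ((hCam.smul_right c).exp_right).eq
      have h4 : a * exp (-(c • m)) = exp (-(c • m)) * a :=
        (((hCam.smul_right c).neg_right).exp_right).eq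
      have h5 : exp (-(c • m)) * exp (c • m) = 1 := by
        rw [← exp_add_of_commute ((Commute.refl (c • m)).neg_left), neg_add_cancel, exp_zero]
      rw [h1, h2]
      rw [mul_assoc (exp (z • b)) (exp (-(c • m))) a, ← h4]
      simp only [mul_assoc]
      rw [← mul_assoc (exp (-(c • m))) (exp (c • m)), h5, one_mul]
      simp only [hg, mul_assoc]
    rw [hkey, mul_assoc]
    rw [CStarRing.norm_mem_unitary_mul _ hu,
      CStarRing.norm_mul_mem_unitary _ (Unitary.star_mem hu)]
  -- g is entire
  have hexp_diff : Differentiable ℂ fun z : ℂ => exp (z • b) := fun z =>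
    (hasDerivAt_exp_smul_const b z).differentiableAt
  have hdiff : Differentiable ℂ g :=
    ((hexp_diff.mul (differentiable_const a)).mul (hexp_diff.comp differentiable_neg))
  -- Liouville : g is constant
  have hconst : ∀ z : ℂ, g z = g 0 := by
    intro z
    apply hdiff.apply_eq_apply_of_bounded _ z 0
    apply Bornology.IsBounded.subset (Metric.isBounded_closedBall (x := (0 : H →L[ℂ] H))
      (r := ‖a‖))
    rintro - ⟨z, rfl⟩
    simpa [Metric.mem_closedBall] using hbound z
  have hg0 : g 0 = a := by simp [hg, exp_zero]
  -- hence `exp (z•b) * a = a * exp (z•b)` for all z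
  have hcomm_exp : ∀ z : ℂ, exp (z • b) * a = a * exp (z • b) := by
    intro z
    have h5 : exp ((-z) • b) * exp (z • b) = 1 := by
      rw [← exp_add_of_commute (((Commute.refl b).smul_left (-z)).smul_right z), neg_smul,
        neg_add_cancel, exp_zero]
    have hz : g z = a := (hconst z).trans hg0
    calc exp (z • b) * a = exp (z • b) * a * (exp ((-z) • b) * exp (z • b)) := by
          rw [h5, mul_one]
      _ = g z * exp (z • b) := by rw [hg]; simp only [mul_assoc]
      _ = a * exp (z • b) := by rw [hz]
  -- differentiate at 0 to conclude `b * a = a * b`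
  have hd1 : HasDerivAt (fun z : ℂ => exp (z • b) * a) (exp ((0 : ℂ) • b) * b * a) 0 :=
    (hasDerivAt_exp_smul_const (𝕂 := ℂ) b 0).mul_const a
  have hd2 : HasDerivAt (fun z : ℂ => exp (z • b) * a) (a * (exp ((0 : ℂ) • b) * b)) 0 := by
    have := (hasDerivAt_exp_smul_const (𝕂 := ℂ) b 0).const_mul a
    apply this.congr_of_eventuallyEq
    filter_upwards with z using (hcomm_exp z)
  have := hd1.unique hd2
  simp only [zero_smul, exp_zero, one_mul] at this
  exact this.symm

/-- A self-adjoint element of `H →L[ℂ] H` squeezed between `-r•1` and `r•1` has norm at most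
`r`. -/
lemma norm_le_of_sandwich {H : Type*} [NormedAddCommGroup H] [InnerProductSpace ℂ H]
    [CompleteSpace H] {T : H →L[ℂ] H} (hT : IsSelfAdjoint T) {r : ℝ}
    (h1 : T ≤ algebraMap ℝ (H →L[ℂ] H) r) (h2 : -T ≤ algebraMap ℝ (H →L[ℂ] H) r)
    (hr : 0 ≤ r) : ‖T‖ ≤ r := by
  rcases subsingleton_or_nontrivial H with hH | hH
  · have : T = 0 := Subsingleton.elim _ _
    simpa [this]
  · have : Nontrivial (H →L[ℂ] H) := by
      obtain ⟨x, hx⟩ := exists_ne (0 : H)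
      refine ⟨1, 0, fun h => hx ?_⟩
      simpa using DFunLike.congr_fun h x
    have hspec1 : ∀ x ∈ spectrum ℝ T, x ≤ r :=
      (le_algebraMap_iff_spectrum_le (a := T) hT).mp h1
    have hspec2 : ∀ x ∈ spectrum ℝ T, -x ≤ r := by
      intro x hx
      have hx' : -x ∈ spectrum ℝ (-T) := by
        rw [← spectrum.neg_eq]
        exact Set.neg_mem_neg.mpr hx
      exact (le_algebraMap_iff_spectrum_le (a := -T) hT.neg).mp h2 _ hx'
    rcases CStarAlgebra.norm_or_neg_norm_mem_spectrum hT with h | h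
    · exact hspec1 _ h
    · simpa using hspec2 _ h

/-- If `M` is a bounded normal operator commuting with `A`, then the norm of the
self-commutator of `A` is bounded by `‖A + M‖²`. -/
theorem selfCommutator_norm_le_sq_norm_add_normal_commuting
    {H : Type*} [NormedAddCommGroup H] [InnerProductSpace ℂ H] [CompleteSpace H]
    (A M : H →L[ℂ] H)
    (hM : adjoint M ∘L M = M ∘L adjoint M)
    (hAM : A ∘L M = M ∘L A) :
    ‖adjoint A ∘L A - A ∘L adjoint A‖ ≤ ‖A + M‖ ^ 2 := by
  have hM' : star M * M = M * star M := by
    simpa only [star_eq_adjoint, mul_def] using hM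
  have hAM' : A * M = M * A := by simpa only [mul_def] using hAM
  -- Fuglede: A commutes with star M
  have hf1 : A * star M = star M * A := fuglede_commute A M hM' hAM'
  -- taking adjoints: star A commutes with M
  have hf2 : star A * M = M * star A := by
    have := congrArg star hf1
    simpa only [star_mul, star_star] using this.symm
  set B : H →L[ℂ] H := A + M with hB
  -- the self-commutators of A and B agree
  have hkey : star A * A - A * star A = star B * B - B * star B := by
    rw [hB, star_add]
    simp only [add_mul, mul_add]
    rw [hM', hf2, show star M * A = A * star M from hf1.symm]
    abel
  have hgoal : adjoint A ∘L A - A ∘L adjoint A = star B * B - B * star B := by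
    rw [← hkey]; rfl
  rw [hgoal]
  have hT : IsSelfAdjoint (star B * B - B * star B) :=
    (IsSelfAdjoint.star_mul_self B).sub (IsSelfAdjoint.mul_star_self B)
  apply norm_le_of_sandwich hT
  · calc star B * B - B * star B ≤ star B * B := sub_le_self _ (mul_star_self_nonneg B)
      _ ≤ algebraMap ℝ (H →L[ℂ] H) (‖B‖ ^ 2) := CStarAlgebra.star_mul_le_algebraMap_norm_sq
  · calc -(star B * B - B * star B) = B * star B - star B * B := by abel
      _ ≤ B * star B := sub_le_self _ (star_mul_self_nonneg B)
      _ ≤ algebraMap ℝ (H →L[ℂ] H) (‖B‖ ^ 2) := CStarAlgebra.mul_star_le_algebraMap_norm_sq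
  · positivity
end

section
/- For any bounded linear operator A on a complex Hilbert space, the norm of the self-commutator satisfies ‖A*A − AA*‖ ≤ (inf_{λ∈ℂ} ‖A − λ·I‖)². -/
open ContinuousLinearMap

/-- A selfadjoint element bounded above by `r • 1` on both sides has norm at most `r`. -/
lemma aux_selfAdjoint_norm_le {A : Type*} [CStarAlgebra A] [PartialOrder A] [StarOrderedRing A]
    {a : A} {r : ℝ} (hr : 0 ≤ r) (ha : IsSelfAdjoint a)
    (h1 : a ≤ algebraMap ℝ A r) (h2 : -a ≤ algebraMap ℝ A r) : ‖a‖ ≤ r := by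
  obtain h | h := subsingleton_or_nontrivial A
  · simpa [Subsingleton.elim a 0] using hr
  rcases CStarAlgebra.norm_or_neg_norm_mem_spectrum ha with hs | hs
  · exact (le_algebraMap_iff_spectrum_le (a := a) ha).mp h1 _ hs
  · have hmem : ‖a‖ ∈ spectrum ℝ (-a) := by
      rw [← spectrum.neg_eq, Set.mem_neg]
      simpa using hs
    exact (le_algebraMap_iff_spectrum_le (a := -a) ha.neg).mp h2 _ hmem

/-- The norm of the self-commutator is at most the square of the norm. -/
lemma aux_commutator_norm_le {A : Type*} [CStarAlgebra A] [PartialOrder A] [StarOrderedRing A]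
    (b : A) : ‖star b * b - b * star b‖ ≤ ‖b‖ ^ 2 := by
  refine aux_selfAdjoint_norm_le (by positivity)
    ((IsSelfAdjoint.star_mul_self b).sub (IsSelfAdjoint.mul_star_self b)) ?_ ?_
  · calc star b * b - b * star b ≤ star b * b := by
          simpa using sub_le_self _ (mul_star_self_nonneg b)
      _ ≤ algebraMap ℝ A (‖b‖ ^ 2) := CStarAlgebra.star_mul_le_algebraMap_norm_sq
  · calc -(star b * b - b * star b) = b * star b - star b * b := neg_sub _ _
      _ ≤ b * star b := by simpa using sub_le_self _ (star_mul_self_nonneg b)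
      _ ≤ algebraMap ℝ A (‖b‖ ^ 2) := CStarAlgebra.mul_star_le_algebraMap_norm_sq

/-- The norm of the self-commutator of `A` is bounded by the square of the distance from `A`
to the scalar operators. -/
theorem selfCommutator_norm_le_inf_dist_scalars_sq
    {H : Type*} [NormedAddCommGroup H] [InnerProductSpace ℂ H] [CompleteSpace H]
    (A : H →L[ℂ] H) :
    ‖adjoint A ∘L A - A ∘L adjoint A‖ ≤ (⨅ lam : ℂ, ‖A - lam • (1 : H →L[ℂ] H)‖) ^ 2 := by
  have key : ∀ lam : ℂ, ‖adjoint A ∘L A - A ∘L adjoint A‖ ≤ ‖A - lam • (1 : H →L[ℂ] H)‖ ^ 2 := by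
    intro lam
    set B : H →L[ℂ] H := A - lam • (1 : H →L[ℂ] H) with hB
    have hcomm : adjoint A ∘L A - A ∘L adjoint A = star B * B - B * star B := by
      have hstar : star B = star A - (starRingEnd ℂ lam) • (1 : H →L[ℂ] H) := by
        simp [hB, star_smul]
      have h1 : adjoint A ∘L A = star A * A := by rw [star_eq_adjoint]; rfl
      have h2 : A ∘L adjoint A = A * star A := by rw [star_eq_adjoint]; rfl
      rw [h1, h2, hstar, hB]
      simp only [sub_mul, mul_sub, smul_mul_assoc, mul_smul_comm, mul_one, one_mul, smul_smul, smul_sub]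
      rw [mul_comm (starRingEnd ℂ lam) lam]
      abel
    rw [hcomm]
    exact aux_commutator_norm_le B
  have hnonneg : ∀ lam : ℂ, (0 : ℝ) ≤ ‖A - lam • (1 : H →L[ℂ] H)‖ := fun _ => norm_nonneg _
  have hsqrt : Real.sqrt ‖adjoint A ∘L A - A ∘L adjoint A‖ ≤
      ⨅ lam : ℂ, ‖A - lam • (1 : H →L[ℂ] H)‖ := by
    refine le_ciInf fun lam => ?_
    have := key lam
    calc Real.sqrt ‖adjoint A ∘L A - A ∘L adjoint A‖
        ≤ Real.sqrt (‖A - lam • (1 : H →L[ℂ] H)‖ ^ 2) := Real.sqrt_le_sqrt this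
      _ = ‖A - lam • (1 : H →L[ℂ] H)‖ := Real.sqrt_sq (hnonneg lam)
  calc ‖adjoint A ∘L A - A ∘L adjoint A‖
      = Real.sqrt ‖adjoint A ∘L A - A ∘L adjoint A‖ ^ 2 :=
        (Real.sq_sqrt (norm_nonneg _)).symm
    _ ≤ (⨅ lam : ℂ, ‖A - lam • (1 : H →L[ℂ] H)‖) ^ 2 :=
        pow_le_pow_left₀ (Real.sqrt_nonneg _) hsqrt 2
end

section
/- Let λ₁, …, λₙ be real numbers with λ₁ + ⋯ + λₙ = 0. Then there exists a permutation σ of {1,…,n} such that for every m with 1 ≤ m ≤ n, the partial sum λ_{σ(1)} + ⋯ + λ_{σ(m)} satisfies 0 ≤ λ_{σ(1)} + ⋯ + λ_{σ(m)} ≤ 2·max_{1≤k≤n} |λ_k|. -/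
/-- Greedy selection step: from a nonempty remaining set we can pick an element keeping
the accumulated sum in `[0, 2M]`. -/
lemma exists_pick {n : ℕ} (l : Fin n → ℝ) (M : ℝ)
    (hle : ∀ k, |l k| ≤ M) (s : Finset (Fin n)) (hne : s.Nonempty)
    (h0 : 0 ≤ -∑ k ∈ s, l k) (h2 : -∑ k ∈ s, l k ≤ 2 * M) :
    ∃ x ∈ s, 0 ≤ -∑ k ∈ s, l k + l x ∧ -∑ k ∈ s, l k + l x ≤ 2 * M := by
  set S : ℝ := -∑ k ∈ s, l k with hS
  by_cases hSM : S ≤ M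
  · by_cases hpos : ∃ x ∈ s, 0 ≤ l x
    · obtain ⟨x, hxs, hx⟩ := hpos
      refine ⟨x, hxs, by linarith, ?_⟩
      have : l x ≤ M := le_trans (le_abs_self _) (hle x)
      linarith
    · push_neg at hpos
      obtain ⟨x, hxs⟩ := hne
      refine ⟨x, hxs, ?_, ?_⟩
      · have hsub : ∑ k ∈ s.erase x, l k ≤ 0 :=
          Finset.sum_nonpos fun k hk => le_of_lt (hpos k (Finset.mem_of_mem_erase hk))
        have hsplit : ∑ k ∈ s, l k = l x + ∑ k ∈ s.erase x, l k :=
          (Finset.add_sum_erase s l hxs).symm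
        rw [hS]
        linarith
      · have := le_of_lt (hpos x hxs)
        linarith
  · push_neg at hSM
    have hsneg : ∑ k ∈ s, l k < 0 := by
      have : 0 < S := lt_of_le_of_lt (le_trans (abs_nonneg (l ⟨0, Fin.pos hne.choose⟩)) (hle _)) hSM
      linarith [hS ▸ this]
    have : ∃ x ∈ s, l x < 0 := by
      by_contra h
      push_neg at h
      exact absurd (Finset.sum_nonneg fun k hk => h k hk) (not_le.mpr hsneg)
    obtain ⟨x, hxs, hx⟩ := this
    have hxM : -M ≤ l x := neg_le_of_abs_le (hle x)
    exact ⟨x, hxs, by linarith, by linarith⟩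

/-- Greedy construction of an ordering of a finite index set keeping partial sums in `[0, 2M]`. -/
lemma exists_list {n : ℕ} (l : Fin n → ℝ) (M : ℝ)
    (hle : ∀ k, |l k| ≤ M) (s : Finset (Fin n)) :
    s.Nonempty → 0 ≤ -∑ k ∈ s, l k → -∑ k ∈ s, l k ≤ 2 * M →
    ∃ L : List (Fin n), L.Nodup ∧ L.toFinset = s ∧
      ∀ i : ℕ, i < L.length →
        0 ≤ -∑ k ∈ s, l k + ((L.take (i + 1)).map l).sum ∧
        -∑ k ∈ s, l k + ((L.take (i + 1)).map l).sum ≤ 2 * M := by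
  induction s using Finset.strongInduction with
  | _ s ih =>
    intro hne h0 h2
    obtain ⟨x, hxs, hx0, hx2⟩ := exists_pick l M hle s hne h0 h2
    have hsplit : ∑ k ∈ s, l k = l x + ∑ k ∈ s.erase x, l k :=
      (Finset.add_sum_erase s l hxs).symm
    have hkey : -∑ k ∈ s.erase x, l k = -∑ k ∈ s, l k + l x := by
      rw [hsplit]; ring
    by_cases hs' : (s.erase x).Nonempty
    · obtain ⟨L', nd', htf', hcond'⟩ :=
        ih (s.erase x) (Finset.erase_ssubset hxs) hs' (by rw [hkey]; exact hx0)
          (by rw [hkey]; exact hx2)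
      refine ⟨x :: L', ?_, ?_, ?_⟩
      · refine List.nodup_cons.mpr ⟨?_, nd'⟩
        intro hmem
        have : x ∈ s.erase x := htf' ▸ List.mem_toFinset.mpr hmem
        exact absurd this (Finset.notMem_erase x s)
      · rw [List.toFinset_cons, htf', Finset.insert_erase hxs]
      · intro i hi
        match i with
        | 0 =>
          have e : (((x :: L').take (0 + 1)).map l).sum = l x := by simp
          rw [e]
          exact ⟨hx0, hx2⟩
        | j + 1 =>
          have hj : j < L'.length := by simpa using hi
          have hc := hcond' j hj
          have hexp : (((x :: L').take (j + 1 + 1)).map l).sum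
              = l x + ((L'.take (j + 1)).map l).sum := by
            simp [List.take_succ_cons]
          rw [hexp]
          rw [hkey] at hc
          exact ⟨by linarith [hc.1], by linarith [hc.2]⟩
    · have hsx : s = {x} := by
        rw [Finset.not_nonempty_iff_eq_empty] at hs'
        have h := Finset.insert_erase hxs
        rw [hs'] at h
        simpa using h.symm
      refine ⟨[x], List.nodup_singleton x, by simp [hsx], ?_⟩
      intro i hi
      have hi0 : i = 0 := by simpa using Nat.lt_one_iff.mp (by simpa using hi)
      subst hi0
      have e : ((([x] : List (Fin n)).take (0 + 1)).map l).sum = l x := by simp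
      rw [e]
      exact ⟨hx0, hx2⟩

/-- Prefix sums of a list as sums over `Finset.range`. -/
lemma take_sum_eq (A : List ℝ) : ∀ j, j ≤ A.length →
    (A.take j).sum = ∑ i ∈ Finset.range j, A.getD i 0 := by
  intro j
  induction j with
  | zero => simp
  | succ j ihj =>
    intro hj
    have hjl : j < A.length := by omega
    rw [Finset.sum_range_succ, ← ihj (by omega), List.sum_take_succ _ _ hjl,
      List.getD_eq_getElem A 0 hjl]

/-- Any finite family of real numbers summing to zero can be rearranged so that all partial
sums lie between `0` and twice the maximum of the absolute values. -/
theorem exists_perm_partial_sums_nonneg_le_two_mul_max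
    (n : ℕ) (hn : 0 < n) (l : Fin n → ℝ) (hsum : ∑ k, l k = 0) :
    ∃ σ : Equiv.Perm (Fin n), ∀ m : Fin n,
      0 ≤ ∑ k ∈ Finset.Iic m, l (σ k) ∧
      ∑ k ∈ Finset.Iic m, l (σ k) ≤ 2 * ⨆ k : Fin n, |l k| := by
  have : Nonempty (Fin n) := ⟨⟨0, hn⟩⟩
  set M : ℝ := ⨆ k : Fin n, |l k| with hM
  have hbdd : BddAbove (Set.range fun k : Fin n => |l k|) :=
    (Set.finite_range _).bddAbove
  have hle : ∀ k, |l k| ≤ M := fun k => le_ciSup hbdd k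
  have hM0 : 0 ≤ M := le_trans (abs_nonneg _) (hle ⟨0, hn⟩)
  obtain ⟨L, nd, htf, hcond⟩ := exists_list l M hle Finset.univ
    Finset.univ_nonempty (by simp [hsum]) (by simp [hsum]; linarith)
  have hlen : L.length = n := by
    rw [← List.toFinset_card_of_nodup nd, htf, Finset.card_univ, Fintype.card_fin]
  have hinj : Function.Injective fun k : Fin n => L.get (Fin.cast hlen.symm k) := by
    intro a b hab
    have := List.nodup_iff_injective_get.mp nd hab
    exact Fin.cast_injective _ this
  obtain ⟨σ, hσ⟩ : ∃ σ : Equiv.Perm (Fin n), ∀ k,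
      σ k = L.get (Fin.cast hlen.symm k) :=
    ⟨Equiv.ofBijective _ ((Finite.injective_iff_bijective).mp hinj), fun k => rfl⟩
  refine ⟨σ, fun m => ?_⟩
  have hsum0 : -∑ k ∈ Finset.univ, l k = (0 : ℝ) := by simp [hsum]
  have hml : (m : ℕ) < L.length := by rw [hlen]; exact m.2
  -- rewrite the partial sum as a prefix sum of the list
  have key : ∑ k ∈ Finset.Iic m, l (σ k) = ((L.take ((m : ℕ) + 1)).map l).sum := by
    have hiic : Finset.Iic ((m : ℕ)) = Finset.range ((m : ℕ) + 1) := by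
      ext x; simp [Nat.lt_succ_iff]
    have hmap : (Finset.Iic m).map Fin.valEmbedding = Finset.Iic ((m : ℕ)) :=
      Fin.map_valEmbedding_Iic m
    have h1 : ((L.map l).take ((m : ℕ) + 1)).sum
        = ∑ i ∈ Finset.range ((m : ℕ) + 1), (L.map l).getD i 0 :=
      take_sum_eq (L.map l) ((m : ℕ) + 1) (by rw [List.length_map, hlen]; omega)
    rw [List.map_take, h1, ← hiic, ← hmap, Finset.sum_map]
    refine Finset.sum_congr rfl fun k hk => ?_
    have hkl : (k : ℕ) < L.length := by rw [hlen]; exact k.2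
    have hkl' : (k : ℕ) < (L.map l).length := by rw [List.length_map]; exact hkl
    rw [Fin.valEmbedding_apply, List.getD_eq_getElem _ 0 hkl', List.getElem_map, hσ k]
    rfl
  have hb := hcond (m : ℕ) hml
  rw [hsum0, zero_add] at hb
  rw [key]
  exact hb
end

section
/- Let A be a bounded linear operator on a nontrivial complex Hilbert space H. For t ∈ [0, 2π), define b_x(t) = sup_{‖x‖=1} Re(e^{it}⟨A x, x⟩) − inf_{‖x‖=1} Re(e^{it}⟨A x, x⟩) and b_y(t) = sup_{‖x‖=1} Im(e^{it}⟨A x, x⟩) − inf_{‖x‖=1} Im(e^{it}⟨A x, x⟩). Then for every t ∈ [0, 2π), ‖A*A − AA*‖ ≤ b_x(t)·b_y(t). -/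
open ContinuousLinearMap

section Aux

variable {H : Type*} [NormedAddCommGroup H] [InnerProductSpace ℂ H] [CompleteSpace H]

/-- For a self-adjoint operator, the operator norm is bounded by any uniform bound on the
numerical range over the unit sphere. -/
theorem aux_selfAdjoint_norm_le_s7 (S : H →L[ℂ] H) (hS : IsSelfAdjoint S) {r : ℝ} (hr : 0 ≤ r)
    (h : ∀ x : H, ‖x‖ = 1 → |(inner ℂ (S x) x : ℂ).re| ≤ r) : ‖S‖ ≤ r := by
  have hsym : ∀ x y : H, (inner ℂ (S y) x : ℂ) = starRingEnd ℂ (inner ℂ (S x) y) := by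
    intro x y
    rw [← hS.adjoint_eq, adjoint_inner_left, inner_conj_symm, hS.adjoint_eq]
  have h2 : ∀ x : H, |(inner ℂ (S x) x : ℂ).re| ≤ r * ‖x‖ ^ 2 := by
    intro x
    rcases eq_or_ne x 0 with rfl | hx
    · simp
    · have hnx : ‖x‖ ≠ 0 := norm_ne_zero_iff.mpr hx
      have hu : ‖(((‖x‖:ℝ))⁻¹ : ℂ) • x‖ = 1 := by
        simp [norm_smul, inv_mul_cancel₀ hnx]
      have hb := h _ hu
      rw [map_smul, inner_smul_left, inner_smul_right] at hb
      simp only [map_inv₀, Complex.conj_ofReal, ← mul_assoc, ← Complex.ofReal_inv,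
        ← Complex.ofReal_mul, Complex.re_ofReal_mul, abs_mul] at hb
      simp only [abs_mul, abs_inv, abs_norm] at hb
      have hpos : (0:ℝ) < ‖x‖ := lt_of_le_of_ne (norm_nonneg x) (Ne.symm hnx)
      have hx2 : ‖x‖⁻¹ * ‖x‖⁻¹ * ‖x‖^2 = 1 := by field_simp
      nlinarith [abs_nonneg ((inner ℂ (S x) x : ℂ).re), sq_nonneg ‖x‖]
  have key : ∀ x y : H, ‖x‖ = 1 → ‖y‖ = 1 → (inner ℂ (S x) y : ℂ).re ≤ r := by
    intro x y hx hy
    have e1 : (inner ℂ (S (x + y)) (x + y) : ℂ)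
        = inner ℂ (S x) x + inner ℂ (S x) y + starRingEnd ℂ (inner ℂ (S x) y : ℂ) + inner ℂ (S y) y := by
      rw [map_add, inner_add_left, inner_add_right, inner_add_right, ← hsym x y]
      ring
    have e2 : (inner ℂ (S (x - y)) (x - y) : ℂ)
        = inner ℂ (S x) x - inner ℂ (S x) y - starRingEnd ℂ (inner ℂ (S x) y : ℂ) + inner ℂ (S y) y := by
      rw [map_sub, inner_sub_left, inner_sub_right, inner_sub_right, ← hsym x y]
      ring
    have hre : (inner ℂ (S (x+y)) (x+y) : ℂ).re - (inner ℂ (S (x-y)) (x-y) : ℂ).re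
        = 4 * (inner ℂ (S x) y : ℂ).re := by
      rw [e1, e2]
      simp only [Complex.add_re, Complex.sub_re, Complex.conj_re]
      ring
    have b1 := h2 (x + y)
    have b2 := h2 (x - y)
    have hpar : ‖x + y‖ ^ 2 + ‖x - y‖ ^ 2 = 2 * (‖x‖ * ‖x‖ + ‖y‖ * ‖y‖) := by
      have := parallelogram_law_with_norm ℂ x y
      nlinarith [this]
    rw [hx, hy] at hpar
    nlinarith [abs_le.mp b1, abs_le.mp b2]
  have key2 : ∀ x y : H, ‖x‖ = 1 → ‖y‖ = 1 → ‖(inner ℂ (S x) y : ℂ)‖ ≤ r := by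
    intro x y hx hy
    set z : ℂ := inner ℂ (S x) y with hz
    rcases eq_or_ne z 0 with h0 | h0
    · simp [h0, hr]
    · set c : ℂ := (‖z‖ : ℂ) / z with hc
      have hcn : ‖c‖ = 1 := by
        rw [hc, norm_div, Complex.norm_real, norm_norm]
        exact div_self (norm_ne_zero_iff.mpr h0)
      have hcy : ‖c • y‖ = 1 := by rw [norm_smul, hcn, hy, one_mul]
      have hk := key x (c • y) hx hcy
      rw [inner_smul_right, hc, div_mul_cancel₀ _ h0] at hk
      simpa using hk
  have key3 : ∀ x : H, ‖x‖ = 1 → ‖S x‖ ≤ r := by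
    intro x hx
    rcases eq_or_ne (S x) 0 with h0 | h0
    · simp [h0, hr]
    · have hn : ‖S x‖ ≠ 0 := norm_ne_zero_iff.mpr h0
      have hy : ‖(((‖S x‖:ℝ))⁻¹ : ℂ) • S x‖ = 1 := by
        simp [norm_smul, inv_mul_cancel₀ hn]
      have hk := key2 x _ hx hy
      rw [inner_smul_right, inner_self_eq_norm_sq_to_K, norm_mul, norm_inv, norm_pow] at hk
      simp only [Complex.norm_real, RCLike.norm_ofReal, abs_norm, norm_norm] at hk
      have hid : ‖S x‖⁻¹ * ‖S x‖ ^ 2 = ‖S x‖ := by field_simp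
      rwa [hid] at hk
  refine opNorm_le_bound S hr fun x => ?_
  rcases eq_or_ne x 0 with rfl | hx
  · simp
  · have hnx : ‖x‖ ≠ 0 := norm_ne_zero_iff.mpr hx
    have hu : ‖(((‖x‖:ℝ))⁻¹ : ℂ) • x‖ = 1 := by
      simp [norm_smul, inv_mul_cancel₀ hnx]
    have hk := key3 _ hu
    rw [map_smul, norm_smul] at hk
    simp only [norm_inv, Complex.norm_real, norm_norm] at hk
    calc ‖S x‖ = ‖x‖ * (‖x‖⁻¹ * ‖S x‖) := by field_simp
      _ ≤ ‖x‖ * r := mul_le_mul_of_nonneg_left hk (norm_nonneg x)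
      _ = r * ‖x‖ := by ring

/-- Centering a self-adjoint operator at the midpoint of its numerical range bounds its norm by
half the width of the numerical range. -/
theorem aux_width_le [Nontrivial H] (P : H →L[ℂ] H) (hP : IsSelfAdjoint P) :
    ‖P - ((((sSup ((fun x : H => (inner ℂ (P x) x : ℂ).re) '' {x : H | ‖x‖ = 1}) +
          sInf ((fun x : H => (inner ℂ (P x) x : ℂ).re) '' {x : H | ‖x‖ = 1})) / 2 : ℝ)) : ℂ) • 1‖
      ≤ (sSup ((fun x : H => (inner ℂ (P x) x : ℂ).re) '' {x : H | ‖x‖ = 1}) -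
          sInf ((fun x : H => (inner ℂ (P x) x : ℂ).re) '' {x : H | ‖x‖ = 1})) / 2 := by
  set f : H → ℝ := fun x => (inner ℂ (P x) x : ℂ).re with hf
  set Sp : Set ℝ := f '' {x : H | ‖x‖ = 1} with hSp
  obtain ⟨x₀, hx₀⟩ : ∃ x : H, ‖x‖ = 1 := exists_norm_eq H zero_le_one
  have hne : Sp.Nonempty := ⟨f x₀, x₀, hx₀, rfl⟩
  have hbddA : BddAbove Sp := by
    refine ⟨‖P‖, ?_⟩
    rintro _ ⟨x, hx, rfl⟩
    calc f x ≤ |(inner ℂ (P x) x : ℂ).re| := le_abs_self _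
      _ ≤ ‖(inner ℂ (P x) x : ℂ)‖ := Complex.abs_re_le_norm _
      _ ≤ ‖P x‖ * ‖x‖ := norm_inner_le_norm _ _
      _ ≤ (‖P‖ * ‖x‖) * ‖x‖ := by
          exact mul_le_mul_of_nonneg_right (P.le_opNorm x) (norm_nonneg x)
      _ = ‖P‖ := by rw [hx]; ring
  have hbddB : BddBelow Sp := by
    refine ⟨-‖P‖, ?_⟩
    rintro _ ⟨x, hx, rfl⟩
    have : |(inner ℂ (P x) x : ℂ).re| ≤ ‖P‖ := by
      calc |(inner ℂ (P x) x : ℂ).re| ≤ ‖(inner ℂ (P x) x : ℂ)‖ := Complex.abs_re_le_norm _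
        _ ≤ ‖P x‖ * ‖x‖ := norm_inner_le_norm _ _
        _ ≤ (‖P‖ * ‖x‖) * ‖x‖ := by
            exact mul_le_mul_of_nonneg_right (P.le_opNorm x) (norm_nonneg x)
        _ = ‖P‖ := by rw [hx]; ring
    linarith [(abs_le.mp this).1]
  have hmem : ∀ x : H, ‖x‖ = 1 → sInf Sp ≤ f x ∧ f x ≤ sSup Sp := fun x hx =>
    ⟨csInf_le hbddB ⟨x, hx, rfl⟩, le_csSup hbddA ⟨x, hx, rfl⟩⟩
  have hMm : sInf Sp ≤ sSup Sp := le_trans (hmem x₀ hx₀).1 (hmem x₀ hx₀).2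
  set d : ℝ := (sSup Sp + sInf Sp) / 2 with hd
  have hsa : IsSelfAdjoint (P - ((d : ℂ)) • 1) := by
    refine hP.sub (IsSelfAdjoint.smul ?_ (IsSelfAdjoint.one _))
    exact Complex.conj_ofReal d
  refine aux_selfAdjoint_norm_le_s7 _ hsa (by linarith) ?_
  intro x hx
  have hxx : (inner ℂ x x : ℂ) = 1 := by
    rw [inner_self_eq_norm_sq_to_K, hx]; norm_num
  have hinner : (inner ℂ ((P - ((d : ℂ)) • 1) x) x : ℂ) = inner ℂ (P x) x - (d : ℂ) := by
    simp only [ContinuousLinearMap.sub_apply, ContinuousLinearMap.smul_apply,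
      ContinuousLinearMap.one_apply, inner_sub_left, inner_smul_left, hxx,
      Complex.conj_ofReal, mul_one]
  rw [hinner]
  have hre : ((inner ℂ (P x) x : ℂ) - (d : ℂ)).re = f x - d := by
    simp [hf, Complex.sub_re, Complex.ofReal_re]
  rw [hre]
  have := hmem x hx
  rw [abs_le]
  constructor <;> [linarith [this.1]; linarith [this.2]]

/-- Self-commutator identity via real and imaginary parts. -/
theorem aux_comm_eq (T : H →L[ℂ] H) :
    adjoint T ∘L T - T ∘L adjoint T =
      (-(2*Complex.I)) •
        ((((2:ℂ)⁻¹ • (T + adjoint T)) ∘L ((Complex.I/2) • (T - adjoint T)))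
          - (((Complex.I/2) • (T - adjoint T)) ∘L ((2:ℂ)⁻¹ • (T + adjoint T)))) := by
  ext x
  simp only [sub_apply, comp_apply, smul_apply, add_apply, map_add, map_sub, map_smul]
  match_scalars <;> simp [Complex.ext_iff] <;> ring

theorem aux_comm_shift (P Q : H →L[ℂ] H) (a b : ℂ) :
    (P - a•1) ∘L (Q - b•1) - (Q - b•1) ∘L (P - a•1) = P ∘L Q - Q ∘L P := by
  ext x
  simp only [sub_apply, comp_apply, smul_apply, ContinuousLinearMap.one_apply, map_sub, map_smul]
  module

end Aux

/-- For every `t ∈ [0, 2π)`, the norm of the self-commutator of `A` is bounded by the product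
of the widths `b_x(t)·b_y(t)` of the numerical range of `e^{it}A` in the directions of the real
and imaginary axes. -/
theorem selfCommutator_norm_le_width_mul_width
    {H : Type*} [NormedAddCommGroup H] [InnerProductSpace ℂ H] [CompleteSpace H]
    [Nontrivial H] (A : H →L[ℂ] H) (t : ℝ) (ht : t ∈ Set.Ico 0 (2 * Real.pi)) :
    ‖adjoint A ∘L A - A ∘L adjoint A‖ ≤
      (sSup ((fun x : H => (Complex.exp (t * Complex.I) * (inner ℂ (A x) x : ℂ)).re) ''
          {x : H | ‖x‖ = 1}) -
        sInf ((fun x : H => (Complex.exp (t * Complex.I) * (inner ℂ (A x) x : ℂ)).re) ''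
          {x : H | ‖x‖ = 1})) *
      (sSup ((fun x : H => (Complex.exp (t * Complex.I) * (inner ℂ (A x) x : ℂ)).im) ''
          {x : H | ‖x‖ = 1}) -
        sInf ((fun x : H => (Complex.exp (t * Complex.I) * (inner ℂ (A x) x : ℂ)).im) ''
          {x : H | ‖x‖ = 1})) := by
  clear ht
  set c : ℂ := Complex.exp (t * Complex.I) with hcdef
  have hc : ‖c‖ = 1 := Complex.norm_exp_ofReal_mul_I t
  have hcc : (starRingEnd ℂ) c * c = 1 := by
    rw [mul_comm, Complex.mul_conj, Complex.normSq_eq_norm_sq, hc]; norm_num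
  have hcc' : c * (starRingEnd ℂ) c = 1 := by rw [mul_comm]; exact hcc
  set T : H →L[ℂ] H := (starRingEnd ℂ c) • A with hTdef
  set P : H →L[ℂ] H := (2:ℂ)⁻¹ • (T + adjoint T) with hPdef
  set Q : H →L[ℂ] H := (Complex.I/2) • (T - adjoint T) with hQdef
  have hadjT : adjoint T = c • adjoint A := by
    rw [hTdef, LinearIsometryEquiv.map_smulₛₗ adjoint, starRingEnd_self_apply]
  -- self-adjointness of P and Q
  have hPsa : IsSelfAdjoint P := by
    rw [isSelfAdjoint_iff']
    rw [hPdef, LinearIsometryEquiv.map_smulₛₗ adjoint, map_add, adjoint_adjoint]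
    simp only [map_inv₀, Complex.conj_ofNat, add_comm]
  have hQsa : IsSelfAdjoint Q := by
    rw [isSelfAdjoint_iff']
    rw [hQdef, LinearIsometryEquiv.map_smulₛₗ adjoint, map_sub, adjoint_adjoint]
    have h1 : (starRingEnd ℂ) (Complex.I/2) = -(Complex.I/2) := by
      rw [map_div₀, Complex.conj_I, Complex.conj_ofNat]; ring
    rw [h1, neg_smul, ← smul_neg, neg_sub]
  -- numerical range values
  have hTin : ∀ x : H, (inner ℂ (T x) x : ℂ) = c * inner ℂ (A x) x := by
    intro x
    rw [hTdef]
    simp only [ContinuousLinearMap.smul_apply, inner_smul_left, starRingEnd_self_apply]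
  have hadjTin : ∀ x : H, (inner ℂ (adjoint T x) x : ℂ) = starRingEnd ℂ (c * inner ℂ (A x) x) := by
    intro x
    rw [adjoint_inner_left, ← inner_conj_symm, hTin]
  have hfP : (fun x : H => (c * inner ℂ (A x) x).re) = fun x : H => (inner ℂ (P x) x : ℂ).re := by
    funext x
    rw [hPdef]
    simp only [ContinuousLinearMap.smul_apply, ContinuousLinearMap.add_apply, inner_smul_left,
      inner_add_left, hTin, hadjTin, map_inv₀, Complex.conj_ofNat]
    rw [Complex.add_conj]
    simp
  have hfQ : (fun x : H => (c * inner ℂ (A x) x).im) = fun x : H => (inner ℂ (Q x) x : ℂ).re := by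
    funext x
    rw [hQdef]
    simp only [ContinuousLinearMap.smul_apply, ContinuousLinearMap.sub_apply, inner_smul_left,
      inner_sub_left, hTin, hadjTin]
    rw [Complex.sub_conj]
    simp only [map_div₀, Complex.conj_I, Complex.conj_ofNat]
    simp [Complex.ext_iff]
    ring
  -- commutator identity
  have h1 : adjoint T ∘L T = adjoint A ∘L A := by
    rw [hadjT, hTdef, smul_comp, comp_smul, smul_smul, hcc', one_smul]
  have h2 : T ∘L adjoint T = A ∘L adjoint A := by
    rw [hadjT, hTdef, smul_comp, comp_smul, smul_smul, hcc, one_smul]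
  have hcomm : adjoint A ∘L A - A ∘L adjoint A = (-(2*Complex.I)) • (P ∘L Q - Q ∘L P) := by
    rw [← h1, ← h2, hPdef, hQdef]
    exact aux_comm_eq T
  have hnorm : ‖adjoint A ∘L A - A ∘L adjoint A‖ = 2 * ‖P ∘L Q - Q ∘L P‖ := by
    rw [hcomm, norm_smul]
    norm_num
  rw [hfP, hfQ, hnorm]
  -- widths
  set Mx : ℝ := sSup ((fun x : H => (inner ℂ (P x) x : ℂ).re) '' {x : H | ‖x‖ = 1}) with hMx
  set mx : ℝ := sInf ((fun x : H => (inner ℂ (P x) x : ℂ).re) '' {x : H | ‖x‖ = 1}) with hmx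
  set My : ℝ := sSup ((fun x : H => (inner ℂ (Q x) x : ℂ).re) '' {x : H | ‖x‖ = 1}) with hMy
  set my : ℝ := sInf ((fun x : H => (inner ℂ (Q x) x : ℂ).re) '' {x : H | ‖x‖ = 1}) with hmy
  set P' : H →L[ℂ] H := P - ((((Mx + mx)/2 : ℝ)) : ℂ) • 1 with hP'
  set Q' : H →L[ℂ] H := Q - ((((My + my)/2 : ℝ)) : ℂ) • 1 with hQ'
  have hPb : ‖P'‖ ≤ (Mx - mx)/2 := aux_width_le P hPsa
  have hQb : ‖Q'‖ ≤ (My - my)/2 := aux_width_le Q hQsa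
  have hshift : P ∘L Q - Q ∘L P = P' ∘L Q' - Q' ∘L P' :=
    (aux_comm_shift P Q _ _).symm
  rw [hshift]
  have hb : ‖P' ∘L Q' - Q' ∘L P'‖ ≤ ‖P'‖ * ‖Q'‖ + ‖Q'‖ * ‖P'‖ :=
    le_trans (norm_sub_le _ _) (add_le_add (opNorm_comp_le _ _) (opNorm_comp_le _ _))
  nlinarith [norm_nonneg P', norm_nonneg Q', norm_nonneg (P' ∘L Q' - Q' ∘L P')]
end

section
/- Let a and b be unit vectors in a complex Hilbert space H, and let P_a and P_b be the orthogonal projections onto the one-dimensional subspaces spanned by a and b respectively (P_a x = ⟨x, a⟩a, P_b x = ⟨x, b⟩b). Then ‖P_a − P_b‖ = √(1 − |⟨a, b⟩|²). -/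
private lemma complex_key (α β c : ℂ) :
    ‖α‖ ^ 2 + ‖β‖ ^ 2 - 2 * ((starRingEnd ℂ) α * β * c).re
      = (1 - ‖c‖ ^ 2) * ‖α‖ ^ 2 + ‖β - (starRingEnd ℂ) c * α‖ ^ 2 := by
  simp only [Complex.sq_norm, Complex.normSq_apply,
    Complex.mul_re, Complex.mul_im, Complex.sub_re, Complex.sub_im,
    Complex.conj_re, Complex.conj_im]
  ring

private lemma re_mul_conj (z : ℂ) : RCLike.re (z * (starRingEnd ℂ) z) = ‖z‖ ^ 2 := by
  simp only [RCLike.re_to_complex, Complex.mul_re, Complex.conj_re, Complex.conj_im,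
    Complex.sq_norm, Complex.normSq_apply]
  ring

private lemma re_conj_mul (z : ℂ) : RCLike.re ((starRingEnd ℂ) z * z) = ‖z‖ ^ 2 := by
  rw [mul_comm]; exact re_mul_conj z

/-- For unit vectors `a, b`, the norm of the difference of the rank-one orthogonal projections
`P_a x = ⟨x,a⟩a` and `P_b x = ⟨x,b⟩b` is `√(1 − |⟨a,b⟩|²)`. -/
theorem norm_sub_rank_one_projections
    {H : Type*} [NormedAddCommGroup H] [InnerProductSpace ℂ H] [CompleteSpace H]
    (a b : H) (ha : ‖a‖ = 1) (hb : ‖b‖ = 1) :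
    ‖(innerSL ℂ a).smulRight a - (innerSL ℂ b).smulRight b‖
      = Real.sqrt (1 - ‖(inner ℂ a b : ℂ)‖ ^ 2) := by
  set T := (innerSL ℂ a).smulRight a - (innerSL ℂ b).smulRight b with hT
  set c : ℂ := inner ℂ a b with hc
  have hTapp : ∀ x : H, T x = (inner ℂ a x : ℂ) • a - (inner ℂ b x : ℂ) • b := by
    intro x; simp [hT]
  have hcle : ‖c‖ ≤ 1 := by
    have := norm_inner_le_norm (𝕜 := ℂ) a b
    rwa [ha, hb, mul_one] at this
  have hs : 0 ≤ 1 - ‖c‖ ^ 2 := by nlinarith [norm_nonneg c]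
  have haa : (inner ℂ a a : ℂ) = 1 := by
    rw [inner_self_eq_norm_sq_to_K, ha]; norm_num
  have hba : (inner ℂ b a : ℂ) = (starRingEnd ℂ) c := by
    rw [hc]; exact (inner_conj_symm b a).symm
  -- lower bound
  have hTa : T a = a - (starRingEnd ℂ) c • b := by
    rw [hTapp, haa, hba, one_smul]
  have hnTa : ‖T a‖ ^ 2 = 1 - ‖c‖ ^ 2 := by
    rw [hTa, @norm_sub_sq ℂ, inner_smul_right, ← hc, re_conj_mul, norm_smul,
      RCLike.norm_conj, ha, hb]
    ring
  have hlow : Real.sqrt (1 - ‖c‖ ^ 2) ≤ ‖T‖ := by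
    have h1 : ‖T a‖ ≤ ‖T‖ := by
      have := T.le_opNorm a; rwa [ha, mul_one] at this
    calc Real.sqrt (1 - ‖c‖ ^ 2) = Real.sqrt (‖T a‖ ^ 2) := by rw [hnTa]
      _ = ‖T a‖ := Real.sqrt_sq (norm_nonneg _)
      _ ≤ ‖T‖ := h1
  -- upper bound
  have hup : ‖T‖ ≤ Real.sqrt (1 - ‖c‖ ^ 2) := by
    apply ContinuousLinearMap.opNorm_le_bound _ (Real.sqrt_nonneg _)
    intro x
    set α : ℂ := inner ℂ a x with hα
    set β : ℂ := inner ℂ b x with hβ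
    set δ : ℂ := β - (starRingEnd ℂ) c * α with hδ
    set f : H := b - c • a with hf
    have h1 : (inner ℂ f x : ℂ) = δ := by
      rw [hf, inner_sub_left, inner_smul_left, hδ, hα, hβ]
    have h2 : (inner ℂ f a : ℂ) = 0 := by
      rw [hf, inner_sub_left, inner_smul_left, haa, hba, mul_one, sub_self]
    have h3 : ‖f‖ ^ 2 = 1 - ‖c‖ ^ 2 := by
      rw [hf, @norm_sub_sq ℂ, inner_smul_right, hba, re_mul_conj, norm_smul, ha, hb]
      ring
    have h4 : ‖x - α • a‖ ^ 2 = ‖x‖ ^ 2 - ‖α‖ ^ 2 := by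
      have hxa : (inner ℂ x a : ℂ) = (starRingEnd ℂ) α := by
        rw [hα]; exact (inner_conj_symm x a).symm
      rw [@norm_sub_sq ℂ, inner_smul_right, hxa, re_mul_conj, norm_smul, ha]
      ring
    have h5 : ‖δ‖ ≤ ‖f‖ * ‖x - α • a‖ := by
      have heq : (inner ℂ f (x - α • a) : ℂ) = δ := by
        rw [inner_sub_right, inner_smul_right, h1, h2, mul_zero, sub_zero]
      calc ‖δ‖ = ‖(inner ℂ f (x - α • a) : ℂ)‖ := by rw [heq]
        _ ≤ ‖f‖ * ‖x - α • a‖ := norm_inner_le_norm _ _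
    have h6 : ‖δ‖ ^ 2 ≤ (1 - ‖c‖ ^ 2) * (‖x‖ ^ 2 - ‖α‖ ^ 2) := by
      calc ‖δ‖ ^ 2 = ‖δ‖ * ‖δ‖ := sq ‖δ‖
        _ ≤ (‖f‖ * ‖x - α • a‖) * (‖f‖ * ‖x - α • a‖) :=
            mul_le_mul h5 h5 (norm_nonneg _) (by positivity)
        _ = ‖f‖ ^ 2 * ‖x - α • a‖ ^ 2 := by ring
        _ = (1 - ‖c‖ ^ 2) * (‖x‖ ^ 2 - ‖α‖ ^ 2) := by rw [h3, h4]
    have h7 : ‖T x‖ ^ 2 = (1 - ‖c‖ ^ 2) * ‖α‖ ^ 2 + ‖δ‖ ^ 2 := by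
      rw [hTapp, ← hα, ← hβ, @norm_sub_sq ℂ, inner_smul_left, inner_smul_right,
        ← hc, norm_smul, norm_smul, ha, hb, mul_one, mul_one]
      have e : (starRingEnd ℂ) α * (β * c) = (starRingEnd ℂ) α * β * c := by ring
      rw [e, RCLike.re_to_complex, hδ]
      linarith [complex_key α β c]
    have h8 : ‖α‖ ≤ ‖x‖ := by
      have := norm_inner_le_norm (𝕜 := ℂ) a x
      rwa [ha, one_mul, ← hα] at this
    have h9 : ‖T x‖ ^ 2 ≤ (1 - ‖c‖ ^ 2) * ‖x‖ ^ 2 := by nlinarith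
    have h10 : ‖T x‖ ≤ Real.sqrt ((1 - ‖c‖ ^ 2) * ‖x‖ ^ 2) := by
      rw [← Real.sqrt_sq (norm_nonneg (T x))]
      exact Real.sqrt_le_sqrt h9
    rwa [Real.sqrt_mul hs, Real.sqrt_sq (norm_nonneg x)] at h10
  exact le_antisymm hup hlow
end

section
/- Let a and b be unit vectors in a complex Hilbert space H and let A be the rank-one operator A x = ⟨x, a⟩ b. Then A*A − AA* = P_a − P_b, where P_a x = ⟨x,a⟩a and P_b x = ⟨x,b⟩b, and consequently ‖A*A − AA*‖ = √(1 − |⟨a, b⟩|²). -/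
open ContinuousLinearMap

set_option maxHeartbeats 800000

/-- For unit vectors `a, b` and the rank-one operator `A x = ⟨x,a⟩b`, the self-commutator of
`A` equals `P_a − P_b`, and its norm is `√(1 − |⟨a,b⟩|²)`. -/
theorem selfCommutator_rank_one
    {H : Type*} [NormedAddCommGroup H] [InnerProductSpace ℂ H] [CompleteSpace H]
    (a b : H) (ha : ‖a‖ = 1) (hb : ‖b‖ = 1)
    (A : H →L[ℂ] H) (hA : ∀ x : H, A x = (inner ℂ a x : ℂ) • b) :
    adjoint A ∘L A - A ∘L adjoint A
        = (innerSL ℂ a).smulRight a - (innerSL ℂ b).smulRight b ∧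
    ‖adjoint A ∘L A - A ∘L adjoint A‖ = Real.sqrt (1 - ‖(inner ℂ a b : ℂ)‖ ^ 2) := by
  have ha2 : (inner ℂ a a : ℂ) = 1 := by
    rw [inner_self_eq_norm_sq_to_K, ha]; norm_num
  have hb2 : (inner ℂ b b : ℂ) = 1 := by
    rw [inner_self_eq_norm_sq_to_K, hb]; norm_num
  have hadj : adjoint A = (innerSL ℂ b).smulRight a := by
    symm
    rw [eq_adjoint_iff]
    intro x y
    simp [hA, inner_smul_left, inner_smul_right, mul_comm]
  have heq : adjoint A ∘L A - A ∘L adjoint A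
      = (innerSL ℂ a).smulRight a - (innerSL ℂ b).smulRight b := by
    ext x
    simp [hA, hadj, inner_smul_right, ha2, hb2, ha, hb, mul_comm]
  refine ⟨heq, ?_⟩
  rw [heq]
  set T : H →L[ℂ] H := (innerSL ℂ a).smulRight a - (innerSL ℂ b).smulRight b with hT
  have hTapp : ∀ x : H, T x = (inner ℂ a x : ℂ) • a - (inner ℂ b x : ℂ) • b := by
    intro x; simp [hT]
  have hsa : star T = T := by
    rw [star_eq_adjoint]
    symm
    rw [eq_adjoint_iff]
    intro x y
    simp only [hTapp, inner_sub_left, inner_sub_right, inner_smul_left, inner_smul_right,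
      inner_conj_symm]
    ring
  set c : ℂ := (inner ℂ a b : ℂ) with hc
  have hcc : (inner ℂ b a : ℂ) = starRingEnd ℂ c := by rw [hc, inner_conj_symm]
  have hT3 : T * T * T = ((1 : ℂ) - c * starRingEnd ℂ c) • T := by
    ext x
    simp only [mul_def, smul_apply, comp_apply, hTapp, inner_sub_right, inner_smul_right,
      ha2, hb2, hcc, hc]
    simp only [smul_sub, smul_smul, sub_smul, one_smul]
    rw [← hc]
    module
  have hnc : ‖c‖ ≤ 1 := by
    calc ‖c‖ ≤ ‖a‖ * ‖b‖ := norm_inner_le_norm a b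
    _ = 1 := by rw [ha, hb]; ring
  have hmc : c * starRingEnd ℂ c = ((‖c‖ ^ 2 : ℝ) : ℂ) := by
    rw [RCLike.mul_conj]; norm_cast
  have hTT : ‖T * T‖ = ‖T‖ * ‖T‖ := by
    have h := CStarRing.norm_star_mul_self (x := T)
    rwa [hsa] at h
  have hT4 : T * T * (T * T) = ((1 : ℝ) - ‖c‖ ^ 2) • (T * T) := by
    rw [← mul_assoc, hT3, smul_mul_assoc, hmc]
    rw [← Complex.ofReal_one, ← Complex.ofReal_sub]
    exact (RCLike.real_smul_eq_coe_smul (K := ℂ) _ _).symm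
  by_cases h0 : ‖T‖ = 0
  · have hTz : T = 0 := norm_eq_zero.mp h0
    have h1 : a - (inner ℂ b a : ℂ) • b = 0 := by
      have := hTapp a
      rw [hTz] at this
      simpa [ha2, ha] using this.symm
    have haeq : a = (inner ℂ b a : ℂ) • b := sub_eq_zero.mp h1
    have hc1 : ‖c‖ = 1 := by
      have h2 := congrArg norm haeq
      rw [norm_smul] at h2
      rw [ha, hb, mul_one] at h2
      rw [hc, ← inner_conj_symm, RCLike.norm_conj]
      exact h2.symm
    rw [h0, hc1]
    norm_num
  · have hTT0 : ‖T * T‖ ≠ 0 := by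
      rw [hTT]; exact mul_ne_zero h0 h0
    have hs1 : (0:ℝ) ≤ 1 - ‖c‖ ^ 2 := by
      nlinarith [norm_nonneg c]
    have h4 : ‖T * T‖ * ‖T * T‖ = (1 - ‖c‖ ^ 2) * ‖T * T‖ := by
      have hst : star (T * T) = T * T := by
        rw [StarMul.star_mul, hsa]
      have h5 := CStarRing.norm_star_mul_self (x := T * T)
      rw [hst, hT4] at h5
      rw [← h5, norm_smul, Real.norm_eq_abs, abs_of_nonneg hs1]
    have hTTval : ‖T * T‖ = 1 - ‖c‖ ^ 2 :=
      mul_right_cancel₀ hTT0 h4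
    have hfin : ‖T‖ * ‖T‖ = 1 - ‖c‖ ^ 2 := by rw [← hTT, hTTval]
    rw [← hfin]
    exact (Real.sqrt_mul_self (norm_nonneg T)).symm
end

section
/- Let a and b be unit vectors in a complex Hilbert space H. Then for every x ∈ H, ‖⟨x, a⟩a − ⟨x, b⟩b‖² ≤ ‖x‖²·(1 − |⟨a, b⟩|²). -/
/-- The `n = 2` case of the generalized Ostrowski inequality: for unit vectors `a, b` and any
`x`, `‖⟨x,a⟩a − ⟨x,b⟩b‖² ≤ ‖x‖²·(1 − |⟨a,b⟩|²)`. -/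
theorem norm_inner_smul_sub_inner_smul_sq_le
    {H : Type*} [NormedAddCommGroup H] [InnerProductSpace ℂ H]
    (a b : H) (ha : ‖a‖ = 1) (hb : ‖b‖ = 1) (x : H) :
    ‖(inner ℂ a x : ℂ) • a - (inner ℂ b x : ℂ) • b‖ ^ 2
      ≤ ‖x‖ ^ 2 * (1 - ‖(inner ℂ a b : ℂ)‖ ^ 2) := by
  set α : ℂ := inner ℂ a x with hα
  set β : ℂ := inner ℂ b x with hβ
  set t : ℂ := inner ℂ a b with ht
  set u : H := α • a - β • b with hu
  set v : H := (α - β * t) • a + (β - α * (starRingEnd ℂ) t) • b with hv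
  have haa : (inner ℂ a a : ℂ) = 1 := by
    rw [inner_self_eq_norm_sq_to_K, ha]; norm_num
  have hbb : (inner ℂ b b : ℂ) = 1 := by
    rw [inner_self_eq_norm_sq_to_K, hb]; norm_num
  have hba : (inner ℂ b a : ℂ) = (starRingEnd ℂ) t := by rw [ht, inner_conj_symm]
  have huu : (inner ℂ u u : ℂ) = ((‖u‖ : ℂ)) ^ 2 := inner_self_eq_norm_sq_to_K u
  -- key identity 1 : ⟪v, x⟫ = ‖u‖²
  have h1 : (inner ℂ v x : ℂ) = ((‖u‖ : ℂ)) ^ 2 := by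
    rw [← huu, hv, hu]
    simp only [inner_add_left, inner_sub_left, inner_sub_right, inner_smul_left,
      inner_smul_right, haa, hbb, hba, ← hα, ← hβ, ← ht, map_sub, map_mul,
      RingHomCompTriple.comp_apply, RingHom.id_apply]
    ring
  -- key identity 2 : ‖v‖² = ‖u‖² * (1 - ‖t‖²)
  have h2 : ((‖v‖ : ℂ)) ^ 2 = ((‖u‖ : ℂ)) ^ 2 * (1 - (‖t‖ : ℂ) ^ 2) := by
    have hvv : (inner ℂ v v : ℂ) = ((‖v‖ : ℂ)) ^ 2 := inner_self_eq_norm_sq_to_K v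
    have htt : ((‖t‖ : ℂ)) ^ 2 = t * (starRingEnd ℂ) t := by
      rw [mul_comm, ← Complex.normSq_eq_conj_mul_self, Complex.normSq_eq_norm_sq]
      push_cast [Complex.sq_norm]
      norm_num [Complex.normSq_eq_norm_sq]
    rw [← hvv, ← huu, htt, hv, hu]
    simp only [inner_add_left, inner_add_right, inner_sub_left, inner_sub_right,
      inner_smul_left, inner_smul_right, haa, hbb, hba, ← hα, ← hβ, ← ht, map_sub, map_mul,
      RingHomCompTriple.comp_apply, RingHom.id_apply]
    ring
  -- Cauchy–Schwarz
  have hcs : ‖(inner ℂ v x : ℂ)‖ ≤ ‖v‖ * ‖x‖ := norm_inner_le_norm v x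
  have h1' : ‖u‖ ^ 2 ≤ ‖v‖ * ‖x‖ := by
    calc ‖u‖ ^ 2 = ‖(inner ℂ v x : ℂ)‖ := by rw [h1]; simp
      _ ≤ ‖v‖ * ‖x‖ := hcs
  have h2' : ‖v‖ ^ 2 = ‖u‖ ^ 2 * (1 - ‖t‖ ^ 2) := by
    exact_mod_cast h2
  have ht1 : ‖t‖ ≤ 1 := by
    have := norm_inner_le_norm (𝕜 := ℂ) a b
    rwa [ha, hb, mul_one] at this
  have hT : 0 ≤ 1 - ‖t‖ ^ 2 := by nlinarith [norm_nonneg t]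
  have hsq : (‖u‖ ^ 2) ^ 2 ≤ ‖u‖ ^ 2 * (1 - ‖t‖ ^ 2) * ‖x‖ ^ 2 := by
    have hvx : (‖v‖ * ‖x‖) ^ 2 = ‖u‖ ^ 2 * (1 - ‖t‖ ^ 2) * ‖x‖ ^ 2 := by
      rw [mul_pow, h2']
    calc (‖u‖ ^ 2) ^ 2 ≤ (‖v‖ * ‖x‖) ^ 2 := by
          apply pow_le_pow_left₀ (by positivity) h1'
      _ = _ := hvx
  nlinarith [sq_nonneg (‖u‖ ^ 2 - ‖x‖ ^ 2 * (1 - ‖t‖ ^ 2)), sq_nonneg ‖u‖, sq_nonneg ‖x‖,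
    mul_nonneg (sq_nonneg ‖x‖) hT, sq_nonneg (‖u‖ * ‖x‖)]
end

section
/- Let a and b be unit vectors in a complex Hilbert space H and let A be the rank-one operator A x = ⟨x, a⟩ b. Then ‖A‖² − w(A)² ≤ ‖A*A − AA*‖, where w(A) = sup_{‖x‖=1} |⟨A x, x⟩| is the numerical radius of A. -/
open ContinuousLinearMap

/-- For the rank-one operator `A x = ⟨x,a⟩b` with `a, b` unit vectors, one has
`‖A‖² − w(A)² ≤ ‖A*A − AA*‖`, where `w(A)` is the numerical radius. -/
theorem norm_sq_sub_numericalRadius_sq_le_selfCommutator_norm_rank_one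
    {H : Type*} [NormedAddCommGroup H] [InnerProductSpace ℂ H] [CompleteSpace H]
    (a b : H) (ha : ‖a‖ = 1) (hb : ‖b‖ = 1)
    (A : H →L[ℂ] H) (hA : ∀ x : H, A x = (inner ℂ a x : ℂ) • b) :
    ‖A‖ ^ 2 - (sSup ((fun x : H => ‖(inner ℂ (A x) x : ℂ)‖) '' {x : H | ‖x‖ = 1})) ^ 2
      ≤ ‖adjoint A ∘L A - A ∘L adjoint A‖ := by
  set s : ℂ := inner ℂ a b with hs
  set t : ℝ := ‖s‖ with ht
  have haa : (inner ℂ a a : ℂ) = 1 := by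
    rw [inner_self_eq_norm_sq_to_K, ha]; norm_num
  have hbb : (inner ℂ b b : ℂ) = 1 := by
    rw [inner_self_eq_norm_sq_to_K, hb]; norm_num
  have hadj : ∀ y : H, adjoint A y = (inner ℂ b y : ℂ) • a := by
    intro y
    apply ext_inner_right ℂ
    intro v
    rw [adjoint_inner_left, hA, inner_smul_right, inner_smul_left, inner_conj_symm, mul_comm]
  have ht0 : 0 ≤ t := norm_nonneg _
  have ht1 : t ≤ 1 := by
    calc ‖s‖ ≤ ‖a‖ * ‖b‖ := norm_inner_le_norm a b
    _ = 1 := by rw [ha, hb]; ring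
  have hcs : (starRingEnd ℂ) s * s = ((t : ℝ) : ℂ) ^ 2 := by
    rw [RCLike.conj_mul, ← ht]; norm_cast
  have hmc : s * (starRingEnd ℂ) s = ((t : ℝ) : ℂ) ^ 2 := by
    rw [mul_comm]; exact hcs
  set W := sSup ((fun x : H => ‖(inner ℂ (A x) x : ℂ)‖) '' {x : H | ‖x‖ = 1}) with hW
  set C := adjoint A ∘L A - A ∘L adjoint A with hCdef
  have hAn : ‖A‖ ≤ 1 := by
    refine opNorm_le_bound A zero_le_one (fun x => ?_)
    rw [hA, norm_smul, hb, mul_one, one_mul]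
    calc ‖(inner ℂ a x : ℂ)‖ ≤ ‖a‖ * ‖x‖ := norm_inner_le_norm a x
    _ = ‖x‖ := by rw [ha, one_mul]
  have hbdd : BddAbove ((fun x : H => ‖(inner ℂ (A x) x : ℂ)‖) '' {x : H | ‖x‖ = 1}) := by
    refine ⟨1, ?_⟩
    rintro _ ⟨x, hx, rfl⟩
    simp only [Set.mem_setOf_eq] at hx
    calc ‖(inner ℂ (A x) x : ℂ)‖ ≤ ‖A x‖ * ‖x‖ := norm_inner_le_norm _ _
    _ ≤ (‖A‖ * ‖x‖) * ‖x‖ := by gcongr; exact le_opNorm A x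
    _ ≤ 1 := by rw [hx]; simpa using hAn
  have hW0 : 0 ≤ W := by
    refine le_trans (norm_nonneg (inner ℂ (A a) a : ℂ)) ?_
    exact le_csSup hbdd ⟨a, by simpa using ha, rfl⟩
  -- numerical radius lower bound
  have hWhalf : 0 < t → (1 + t) / 2 ≤ W := by
    intro htpos
    have hts : (t : ℂ) ≠ 0 := by exact_mod_cast htpos.ne'
    set l : ℂ := (starRingEnd ℂ) s / t with hl
    set x0 : H := a + l • b with hx0
    have hax0 : (inner ℂ a x0 : ℂ) = ((1 + t : ℝ) : ℂ) := by
      rw [hx0, inner_add_right, inner_smul_right, haa, ← hs, hl]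
      field_simp
      rw [hcs]; push_cast; ring
    have hbx0 : (inner ℂ b x0 : ℂ) = (starRingEnd ℂ) s * (((1 + t) / t : ℝ) : ℂ) := by
      rw [hx0, inner_add_right, inner_smul_right, hbb, mul_one, ← inner_conj_symm b a, ← hs, hl]
      push_cast
      field_simp
      ring
    have hbx0n : ‖(inner ℂ b x0 : ℂ)‖ = 1 + t := by
      rw [hbx0, norm_mul, RCLike.norm_conj, ← ht, Complex.norm_real, Real.norm_eq_abs,
        abs_of_nonneg (by positivity : (0:ℝ) ≤ (1 + t) / t)]
      field_simp
    have hax0n : ‖(inner ℂ a x0 : ℂ)‖ = 1 + t := by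
      rw [hax0, Complex.norm_real, Real.norm_eq_abs,
        abs_of_nonneg (by linarith : (0:ℝ) ≤ 1 + t)]
    have hinner : (inner ℂ x0 x0 : ℂ) = ((2 + 2 * t : ℝ) : ℂ) := by
      rw [hx0, inner_add_left, inner_smul_left]
      rw [show (a + l • b : H) = x0 from rfl, hax0, hbx0, hl, map_div₀,
        Complex.conj_conj, Complex.conj_ofReal]
      push_cast
      field_simp
      linear_combination (1 + (t:ℂ)) * hmc
    have hx0sq : ‖x0‖ ^ 2 = 2 + 2 * t := by
      have h := inner_self_eq_norm_sq_to_K (𝕜 := ℂ) x0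
      rw [hinner] at h
      have h2 := congrArg Complex.re h.symm
      simpa [← Complex.ofReal_pow] using h2
    have hr : 0 < ‖x0‖ := by nlinarith [norm_nonneg x0]
    set x : H := ((‖x0‖⁻¹ : ℝ) : ℂ) • x0 with hx
    have hxnorm : ‖x‖ = 1 := by
      rw [hx, norm_smul, Complex.norm_real, Real.norm_eq_abs, abs_of_pos (by positivity)]
      exact inv_mul_cancel₀ hr.ne'
    have h1 : ‖(inner ℂ a x : ℂ)‖ = ‖x0‖⁻¹ * (1 + t) := by
      rw [hx, inner_smul_right, norm_mul, hax0n, Complex.norm_real, Real.norm_eq_abs,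
        abs_of_pos (by positivity)]
    have h2 : ‖(inner ℂ b x : ℂ)‖ = ‖x0‖⁻¹ * (1 + t) := by
      rw [hx, inner_smul_right, norm_mul, hbx0n, Complex.norm_real, Real.norm_eq_abs,
        abs_of_pos (by positivity)]
    have hval : ‖(inner ℂ (A x) x : ℂ)‖ = (1 + t) / 2 := by
      rw [hA, inner_smul_left, norm_mul, RCLike.norm_conj, h1, h2]
      rw [show ‖x0‖⁻¹ * (1 + t) * (‖x0‖⁻¹ * (1 + t)) = (1 + t)^2 / ‖x0‖^2 by
        rw [sq, sq]; field_simp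
      ]
      rw [hx0sq, div_eq_iff (ne_of_gt (by positivity : (0:ℝ) < 2 + 2 * t))]
      ring
    calc (1 + t) / 2 = ‖(inner ℂ (A x) x : ℂ)‖ := hval.symm
    _ ≤ W := le_csSup hbdd ⟨x, hxnorm, rfl⟩
  -- self-commutator lower bound
  have hCb : t < 1 → 1 - t ^ 2 ≤ ‖C‖ := by
    intro htlt
    set y : H := a - ((starRingEnd ℂ) s) • b with hy
    have hby : (inner ℂ b y : ℂ) = 0 := by
      rw [hy, inner_sub_right, inner_smul_right, hbb, mul_one, ← inner_conj_symm b a, ← hs,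
        sub_self]
    have hay : (inner ℂ a y : ℂ) = ((1 - t ^ 2 : ℝ) : ℂ) := by
      rw [hy, inner_sub_right, inner_smul_right, haa, ← hs, hcs]
      push_cast; ring
    have hyy : (inner ℂ y y : ℂ) = ((1 - t ^ 2 : ℝ) : ℂ) := by
      rw [hy, inner_sub_left, inner_smul_left]
      rw [show (a - (starRingEnd ℂ) s • b : H) = y from rfl, hay, hby, mul_zero, sub_zero]
    have hysq : ‖y‖ ^ 2 = 1 - t ^ 2 := by
      have h := inner_self_eq_norm_sq_to_K (𝕜 := ℂ) y
      rw [hyy] at h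
      have h2 := congrArg Complex.re h.symm
      simpa [← Complex.ofReal_pow] using h2
    have hCy : C y = ((1 - t ^ 2 : ℝ) : ℂ) • a := by
      rw [hCdef]
      simp only [ContinuousLinearMap.sub_apply, ContinuousLinearMap.comp_apply]
      rw [hA y, hadj y, hby, hay]
      rw [map_smul, hadj b, hbb, map_smul, hA a, haa]
      simp
    have h1 : ‖(inner ℂ (C y) y : ℂ)‖ = (1 - t ^ 2) * (1 - t ^ 2) := by
      rw [hCy, inner_smul_left, hay, Complex.conj_ofReal, ← Complex.ofReal_mul,
        Complex.norm_real, Real.norm_eq_abs, abs_of_nonneg (by nlinarith)]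
    have hkey : (1 - t ^ 2) * (1 - t ^ 2) ≤ ‖C‖ * (1 - t ^ 2) := by
      calc (1 - t ^ 2) * (1 - t ^ 2) = ‖(inner ℂ (C y) y : ℂ)‖ := h1.symm
      _ ≤ ‖C y‖ * ‖y‖ := norm_inner_le_norm _ _
      _ ≤ (‖C‖ * ‖y‖) * ‖y‖ := by gcongr; exact le_opNorm C y
      _ = ‖C‖ * ‖y‖ ^ 2 := by ring
      _ = ‖C‖ * (1 - t ^ 2) := by rw [hysq]
    have hpos : 0 < 1 - t ^ 2 := by nlinarith
    exact le_of_mul_le_mul_right (by linarith [hkey]) hpos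
  have hA0 : 0 ≤ ‖A‖ := norm_nonneg _
  have hC0 : 0 ≤ ‖C‖ := norm_nonneg _
  rcases eq_or_lt_of_le ht1 with h1 | h1
  · have hW1 : 1 ≤ W := by
      have := hWhalf (by rw [h1]; norm_num)
      rw [h1] at this; linarith
    nlinarith
  · have hWt : t ≤ W := by
      rcases eq_or_lt_of_le ht0 with h0 | h0
      · rw [← h0]; exact hW0
      · linarith [hWhalf h0]
    have := hCb h1
    nlinarith
end

section
/- Let V be the Volterra integration operator on the complex Hilbert space L²(0,1), i.e. the bounded linear operator such that for every f ∈ L²(0,1), (V f)(x) = ∫₀ˣ f(t) dt for almost every x ∈ (0,1). Then the norm of its self-commutator is ‖V*V − VV*‖ = √3/6. -/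
open MeasureTheory ContinuousLinearMap

/-- The Lebesgue measure restricted to the interval `(0,1)`. -/
noncomputable def mu01 : Measure ℝ := volume.restrict (Set.Ioo (0 : ℝ) 1)

open scoped InnerProductSpace ComplexConjugate

instance : IsProbabilityMeasure mu01 := ⟨by simp [mu01]⟩

namespace Volt

lemma ae_mem01 : ∀ᵐ x ∂mu01, x ∈ Set.Ioo (0:ℝ) 1 :=
  ae_restrict_mem measurableSet_Ioo

lemma memL2_id : MemLp (fun x : ℝ => (x:ℂ)) 2 mu01 := by
  apply MemLp.of_bound (C := 1)
  · exact (Complex.continuous_ofReal.aestronglyMeasurable)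
  · filter_upwards [ae_mem01] with x hx
    rw [Complex.norm_real, Real.norm_eq_abs, abs_of_pos hx.1]; exact hx.2.le

noncomputable def u : Lp ℂ 2 mu01 := (memLp_const (1:ℂ)).toLp _
noncomputable def w : Lp ℂ 2 mu01 := memL2_id.toLp _

lemma integral_id01 : ∫ x in Set.Ioo (0:ℝ) 1, (x:ℂ) = 1/2 := by
  have h2 : (∫ x in Set.Ioo (0:ℝ) 1, (x:ℂ)) = ((∫ x in Set.Ioo (0:ℝ) 1, x : ℝ) : ℂ) :=
    integral_ofReal
  rw [h2, ← MeasureTheory.integral_Ioc_eq_integral_Ioo,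
    ← intervalIntegral.integral_of_le (by norm_num : (0:ℝ) ≤ 1)]
  have := @integral_id (0:ℝ) 1
  rw [this]; norm_num

lemma integral_sq01 : ∫ x in Set.Ioo (0:ℝ) 1, (x:ℂ)*(x:ℂ) = 1/3 := by
  have : ∀ x : ℝ, (x:ℂ)*(x:ℂ) = ((x^2 : ℝ) : ℂ) := by intro x; push_cast; ring
  simp_rw [this]
  have h2 : (∫ x in Set.Ioo (0:ℝ) 1, ((x^2 : ℝ):ℂ)) = ((∫ x in Set.Ioo (0:ℝ) 1, x^2 : ℝ) : ℂ) :=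
    integral_ofReal
  rw [h2, ← MeasureTheory.integral_Ioc_eq_integral_Ioo,
    ← intervalIntegral.integral_of_le (by norm_num : (0:ℝ) ≤ 1)]
  have := integral_pow (a := (0:ℝ)) (b := 1) 2
  rw [this]; norm_num

lemma coe_u : (u : ℝ → ℂ) =ᵐ[mu01] fun _ => (1:ℂ) := (memLp_const (1:ℂ)).coeFn_toLp
lemma coe_w : (w : ℝ → ℂ) =ᵐ[mu01] fun x => (x:ℂ) := memL2_id.coeFn_toLp

lemma inner_uu : ⟪u, u⟫_ℂ = 1 := by
  rw [MeasureTheory.L2.inner_def]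
  calc ∫ a, ⟪(u : ℝ → ℂ) a, (u : ℝ → ℂ) a⟫_ℂ ∂mu01
      = ∫ _, (1:ℂ) ∂mu01 := by
        apply integral_congr_ae
        filter_upwards [coe_u] with a ha
        rw [ha]; simp [RCLike.inner_apply]
    _ = 1 := by simp

lemma inner_uw : ⟪u, w⟫_ℂ = 1/2 := by
  rw [MeasureTheory.L2.inner_def]
  calc ∫ a, ⟪(u : ℝ → ℂ) a, (w : ℝ → ℂ) a⟫_ℂ ∂mu01
      = ∫ a, (a:ℂ) ∂mu01 := by
        apply integral_congr_ae
        filter_upwards [coe_u, coe_w] with a ha hw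
        rw [ha, hw]; simp [RCLike.inner_apply]
    _ = 1/2 := integral_id01

lemma inner_wu : ⟪w, u⟫_ℂ = 1/2 := by
  rw [← inner_conj_symm, inner_uw]
  simp [Complex.ext_iff]

lemma inner_ww : ⟪w, w⟫_ℂ = 1/3 := by
  rw [MeasureTheory.L2.inner_def]
  calc ∫ a, ⟪(w : ℝ → ℂ) a, (w : ℝ → ℂ) a⟫_ℂ ∂mu01
      = ∫ a, (a:ℂ)*(a:ℂ) ∂mu01 := by
        apply integral_congr_ae
        filter_upwards [coe_w] with a hw
        rw [hw, RCLike.inner_apply, Complex.conj_ofReal]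
    _ = 1/3 := integral_sq01


lemma integrable_conj {f : ℝ → ℂ} {μ : Measure ℝ} (h : Integrable f μ) :
    Integrable (fun x => conj (f x)) μ := by
  refine ⟨RCLike.continuous_conj.comp_aestronglyMeasurable h.1, ?_⟩
  have := h.2
  simpa [HasFiniteIntegral] using this

/-- the sub-diagonal region -/
def A : Set (ℝ × ℝ) := {p | 0 < p.2 ∧ p.2 < p.1}
/-- the super-diagonal region -/
def B : Set (ℝ × ℝ) := {p | 0 < p.1 ∧ p.1 < p.2}

lemma measA : MeasurableSet A :=
  (measurableSet_lt measurable_const measurable_snd).inter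
    (measurableSet_lt measurable_snd measurable_fst)

lemma measB : MeasurableSet B :=
  (measurableSet_lt measurable_const measurable_fst).inter
    (measurableSet_lt measurable_fst measurable_snd)

lemma inner_int_eq (F : ℝ → ℂ) {x : ℝ} (hx : x ∈ Set.Ioo (0:ℝ) 1) :
    (∫ t in Set.Ioo (0:ℝ) x, F t) = ∫ t, (Set.Ioo (0:ℝ) x).indicator F t ∂mu01 := by
  rw [integral_indicator measurableSet_Ioo, mu01, Measure.restrict_restrict measurableSet_Ioo,
    Set.inter_eq_left.2 (Set.Ioo_subset_Ioo le_rfl hx.2.le)]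

lemma diag_null : (mu01.prod mu01) {p : ℝ × ℝ | p.1 = p.2} = 0 := by
  have hm : MeasurableSet {p : ℝ × ℝ | p.1 = p.2} :=
    measurableSet_eq_fun measurable_fst measurable_snd
  rw [Measure.prod_apply hm]
  have hx : ∀ x : ℝ, mu01 {x} = 0 := by
    intro x
    rw [mu01, Measure.restrict_apply (measurableSet_singleton x)]
    exact le_antisymm (le_trans (measure_mono Set.inter_subset_left) (by simp)) zero_le
  simp [hx]

theorem key (F G : ℝ → ℂ) (hF : Integrable F mu01) (hG : Integrable G mu01) :
    (∫ x, (∫ t in Set.Ioo (0:ℝ) x, F t) * G x ∂mu01)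
      + (∫ x, F x * (∫ t in Set.Ioo (0:ℝ) x, G t) ∂mu01)
    = (∫ x, F x ∂mu01) * (∫ x, G x ∂mu01) := by
  set μ2 := mu01.prod mu01 with hμ2
  have hW : Integrable (fun p : ℝ × ℝ => F p.1 * G p.2) μ2 := hF.mul_prod hG
  have hW' : Integrable (fun p : ℝ × ℝ => G p.1 * F p.2) μ2 := hG.mul_prod hF
  -- term 1
  have h1 : (∫ x, (∫ t in Set.Ioo (0:ℝ) x, F t) * G x ∂mu01)
      = ∫ p, A.indicator (fun p : ℝ × ℝ => G p.1 * F p.2) p ∂μ2 := by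
    have step : (∫ x, ∫ t, A.indicator (fun p : ℝ × ℝ => G p.1 * F p.2) (x, t) ∂mu01 ∂mu01)
        = ∫ p, A.indicator (fun p : ℝ × ℝ => G p.1 * F p.2) p ∂μ2 :=
      MeasureTheory.integral_integral (by exact hW'.indicator measA)
    rw [← step]
    apply integral_congr_ae
    filter_upwards [ae_restrict_mem measurableSet_Ioo] with x hx
    rw [inner_int_eq F hx, ← integral_mul_const]
    apply integral_congr_ae
    filter_upwards [] with t
    by_cases h : t ∈ Set.Ioo (0:ℝ) x
    · rw [Set.indicator_of_mem h, Set.indicator_of_mem (by exact ⟨h.1, h.2⟩ : (x,t) ∈ A)]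
      ring
    · rw [Set.indicator_of_notMem h, Set.indicator_of_notMem
        (by simpa [A, Set.mem_Ioo] using h), zero_mul]
  -- term 2
  have h2 : (∫ x, F x * (∫ t in Set.Ioo (0:ℝ) x, G t) ∂mu01)
      = ∫ p, A.indicator (fun p : ℝ × ℝ => F p.1 * G p.2) p ∂μ2 := by
    have step : (∫ x, ∫ t, A.indicator (fun p : ℝ × ℝ => F p.1 * G p.2) (x, t) ∂mu01 ∂mu01)
        = ∫ p, A.indicator (fun p : ℝ × ℝ => F p.1 * G p.2) p ∂μ2 :=
      MeasureTheory.integral_integral (by exact hW.indicator measA)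
    rw [← step]
    apply integral_congr_ae
    filter_upwards [ae_restrict_mem measurableSet_Ioo] with x hx
    rw [inner_int_eq G hx, ← integral_const_mul]
    apply integral_congr_ae
    filter_upwards [] with t
    by_cases h : t ∈ Set.Ioo (0:ℝ) x
    · rw [Set.indicator_of_mem h, Set.indicator_of_mem (by exact ⟨h.1, h.2⟩ : (x,t) ∈ A)]
    · rw [Set.indicator_of_notMem h, Set.indicator_of_notMem
        (by simpa [A, Set.mem_Ioo] using h), mul_zero]
  -- swap term 1
  have h3 : (∫ p, A.indicator (fun p : ℝ × ℝ => G p.1 * F p.2) p ∂μ2)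
      = ∫ p, B.indicator (fun p : ℝ × ℝ => F p.1 * G p.2) p ∂μ2 := by
    rw [← MeasureTheory.integral_prod_swap
      (f := fun p => A.indicator (fun p : ℝ × ℝ => G p.1 * F p.2) p)]
    apply integral_congr_ae
    filter_upwards [] with p
    by_cases h : p ∈ B
    · rw [Set.indicator_of_mem (by exact ⟨h.1, h.2⟩ : p.swap ∈ A), Set.indicator_of_mem h]
      exact mul_comm _ _
    · rw [Set.indicator_of_notMem (by simpa [A, B, Prod.swap] using h),
        Set.indicator_of_notMem h]
  rw [h1, h2, h3, ← integral_add ((hW.indicator measB)) ((hW.indicator measA))]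
  have h4 : (fun p => B.indicator (fun p : ℝ × ℝ => F p.1 * G p.2) p
        + A.indicator (fun p : ℝ × ℝ => F p.1 * G p.2) p)
      =ᵐ[μ2] fun p : ℝ × ℝ => F p.1 * G p.2 := by
    have hmem : ∀ᵐ p ∂μ2, p ∈ (Set.Ioo (0:ℝ) 1) ×ˢ (Set.Ioo (0:ℝ) 1) := by
      rw [hμ2, mu01, Measure.prod_restrict]
      exact ae_restrict_mem (measurableSet_Ioo.prod measurableSet_Ioo)
    have hdiag : ∀ᵐ p : ℝ × ℝ ∂μ2, p.1 ≠ p.2 := by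
      rw [ae_iff]
      simpa using diag_null
    filter_upwards [hmem, hdiag] with p hp hne
    rcases lt_or_gt_of_ne hne with h | h
    · have hB : p ∈ B := ⟨hp.1.1, h⟩
      have hA : p ∉ A := fun hA => absurd h (not_lt.2 hA.2.le)
      rw [Set.indicator_of_mem hB, Set.indicator_of_notMem hA, add_zero]
    · have hA : p ∈ A := ⟨hp.2.1, h⟩
      have hB : p ∉ B := fun hB => absurd h (not_lt.2 hB.2.le)
      rw [Set.indicator_of_mem hA, Set.indicator_of_notMem hB, zero_add]
  rw [integral_congr_ae h4, MeasureTheory.integral_prod_mul]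


lemma integrable_coe (f : Lp ℂ 2 mu01) : Integrable (f : ℝ → ℂ) mu01 :=
  (Lp.memLp f).integrable (by norm_num)

noncomputable def Pop : Lp ℂ 2 mu01 →L[ℂ] Lp ℂ 2 mu01 := (innerSL ℂ u).smulRight u

lemma Pop_apply (f : Lp ℂ 2 mu01) : Pop f = ⟪u, f⟫_ℂ • u := rfl

lemma inner_u (g : Lp ℂ 2 mu01) : ⟪u, g⟫_ℂ = ∫ x, g x ∂mu01 := by
  rw [MeasureTheory.L2.inner_def]
  apply integral_congr_ae
  filter_upwards [coe_u] with a ha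
  rw [RCLike.inner_apply, ha]; simp

section V
variable (V : Lp ℂ 2 mu01 →L[ℂ] Lp ℂ 2 mu01)
  (hV : ∀ f : Lp ℂ 2 mu01, ∀ᵐ x ∂mu01, V f x = ∫ t in Set.Ioo (0 : ℝ) x, f t)

include hV

lemma inner_V_left (f g : Lp ℂ 2 mu01) :
    ⟪V f, g⟫_ℂ = ∫ x, (∫ t in Set.Ioo (0:ℝ) x, conj ((f : ℝ → ℂ) t)) * (g : ℝ → ℂ) x ∂mu01 := by
  rw [MeasureTheory.L2.inner_def]
  apply integral_congr_ae
  filter_upwards [hV f] with x hx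
  rw [RCLike.inner_apply, hx, ← integral_conj]; ring

lemma inner_V_right (f g : Lp ℂ 2 mu01) :
    ⟪f, V g⟫_ℂ = ∫ x, conj ((f : ℝ → ℂ) x) * (∫ t in Set.Ioo (0:ℝ) x, (g : ℝ → ℂ) t) ∂mu01 := by
  rw [MeasureTheory.L2.inner_def]
  apply integral_congr_ae
  filter_upwards [hV g] with x hx
  rw [RCLike.inner_apply, hx]; ring

lemma adjoint_V : adjoint V = Pop - V := by
  symm
  rw [eq_adjoint_iff]
  intro f g
  rw [sub_apply, inner_sub_left, Pop_apply, inner_smul_left, inner_V_left V hV,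
    inner_V_right V hV, inner_u g, inner_u f]
  have hkey := key (fun t => conj ((f : ℝ → ℂ) t)) (g : ℝ → ℂ)
    (integrable_conj (integrable_coe f)) (integrable_coe g)
  have hcf : conj (∫ x, (f : ℝ → ℂ) x ∂mu01) = ∫ x, conj ((f : ℝ → ℂ) x) ∂mu01 :=
    (integral_conj).symm
  rw [hcf]
  linear_combination -hkey

lemma V_u : V u = w := by
  apply Lp.ext
  filter_upwards [hV u, coe_w, ae_mem01] with x hx hw hx01
  rw [hx, hw]
  have hae : ∀ᵐ t ∂(volume.restrict (Set.Ioo (0:ℝ) x)), (u : ℝ → ℂ) t = 1 := by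
    have : volume.restrict (Set.Ioo (0:ℝ) x) = mu01.restrict (Set.Ioo (0:ℝ) x) := by
      rw [mu01, Measure.restrict_restrict measurableSet_Ioo,
        Set.inter_eq_left.2 (Set.Ioo_subset_Ioo le_rfl hx01.2.le)]
    rw [this]
    exact ae_restrict_of_ae coe_u
  have h2 : ∫ t in Set.Ioo (0:ℝ) x, (u : ℝ → ℂ) t = ∫ _ in Set.Ioo (0:ℝ) x, (1:ℂ) :=
    integral_congr_ae hae
  rw [h2, setIntegral_const]
  simp only [measureReal_def, Real.volume_Ioo, sub_zero, smul_eq_mul, mul_one]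
  rw [ENNReal.toReal_ofReal hx01.1.le]
  simp

lemma adjoint_V_u : adjoint V u = u - w := by
  rw [adjoint_V V hV, sub_apply, Pop_apply, inner_uu, one_smul, V_u V hV]

lemma comm_apply (f : Lp ℂ 2 mu01) :
    (adjoint V ∘L V - V ∘L adjoint V) f = ⟪u - w, f⟫_ℂ • u - ⟪u, f⟫_ℂ • w := by
  have h1 : (adjoint V ∘L V - V ∘L adjoint V) f
      = Pop (V f) - V (Pop f) := by
    rw [sub_apply, comp_apply, comp_apply, adjoint_V V hV, sub_apply, sub_apply, map_sub]
    abel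
  rw [h1, Pop_apply, Pop_apply, ContinuousLinearMap.map_smul, V_u V hV,
    ← adjoint_inner_left V, adjoint_V_u V hV]


end V

-- ### Stage 4: spectral computation

noncomputable def sR : ℝ := Real.sqrt 3
noncomputable def sC : ℂ := (sR : ℂ)
noncomputable def lam : ℂ := sC / 6

lemma hsR_sq : sR ^ 2 = 3 := Real.sq_sqrt (by norm_num)
lemma hsR_nonneg : 0 ≤ sR := Real.sqrt_nonneg 3
lemma hsR_lt_two : sR < 2 := by nlinarith [hsR_sq, hsR_nonneg]
lemma hsC_sq : sC ^ 2 = 3 := by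
  rw [sC, ← Complex.ofReal_pow, hsR_sq]; norm_num
lemma conj_sC : conj sC = sC := Complex.conj_ofReal _
lemma hsC_sq' : ((sR : ℝ) : ℂ)^2 = 3 := hsC_sq

noncomputable def e₁ : Lp ℂ 2 mu01 := u + (sC - 3) • w
noncomputable def e₂ : Lp ℂ 2 mu01 := u - (sC + 3) • w

lemma inner_e11 : ⟪e₁, e₁⟫_ℂ = 2 - sC := by
  simp only [e₁, inner_add_left, inner_add_right, inner_smul_left, inner_smul_right,
    inner_uu, inner_uw, inner_wu, inner_ww, map_sub, conj_sC, Complex.conj_ofNat]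
  linear_combination hsC_sq / 3

lemma inner_e22 : ⟪e₂, e₂⟫_ℂ = 2 + sC := by
  simp only [e₂, inner_sub_left, inner_sub_right, inner_smul_left, inner_smul_right,
    inner_uu, inner_uw, inner_wu, inner_ww, map_add, conj_sC, Complex.conj_ofNat]
  linear_combination hsC_sq / 3

lemma inner_e12 : ⟪e₁, e₂⟫_ℂ = 0 := by
  simp only [e₁, e₂, inner_add_left, inner_sub_right, inner_smul_left, inner_smul_right,
    inner_uu, inner_uw, inner_wu, inner_ww, map_sub, map_add, conj_sC, Complex.conj_ofNat]
  linear_combination -hsC_sq / 3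

lemma inner_e21 : ⟪e₂, e₁⟫_ℂ = 0 := by
  rw [← inner_conj_symm, inner_e12, map_zero]

lemma norm_e1_sq : ‖e₁‖ ^ 2 = 2 - sR := by
  have h := inner_self_eq_norm_sq_to_K (𝕜 := ℂ) e₁
  rw [inner_e11] at h
  have : ((2 - sR : ℝ) : ℂ) = ((‖e₁‖ ^ 2 : ℝ) : ℂ) := by
    push_cast
    rw [← sC]
    exact h
  exact (Complex.ofReal_inj.1 this).symm

lemma norm_e2_sq : ‖e₂‖ ^ 2 = 2 + sR := by
  have h := inner_self_eq_norm_sq_to_K (𝕜 := ℂ) e₂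
  rw [inner_e22] at h
  have : ((2 + sR : ℝ) : ℂ) = ((‖e₂‖ ^ 2 : ℝ) : ℂ) := by
    push_cast
    rw [← sC]
    exact h
  exact (Complex.ofReal_inj.1 this).symm

lemma norm_e1_pos : 0 < ‖e₁‖ := by
  by_contra h
  push_neg at h
  have h0 : ‖e₁‖ = 0 := le_antisymm h (norm_nonneg _)
  have := norm_e1_sq
  rw [h0] at this
  nlinarith [hsR_lt_two]

lemma norm_e2_pos : 0 < ‖e₂‖ := by
  by_contra h
  push_neg at h
  have h0 : ‖e₂‖ = 0 := le_antisymm h (norm_nonneg _)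
  have := norm_e2_sq
  rw [h0] at this
  nlinarith [hsR_nonneg]

section V2
variable (V : Lp ℂ 2 mu01 →L[ℂ] Lp ℂ 2 mu01)
  (hV : ∀ f : Lp ℂ 2 mu01, ∀ᵐ x ∂mu01, V f x = ∫ t in Set.Ioo (0 : ℝ) x, f t)
include hV

lemma C_apply_eig (f : Lp ℂ 2 mu01) :
    (adjoint V ∘L V - V ∘L adjoint V) f
      = (lam * (2 + sC) * ⟪e₁, f⟫_ℂ) • e₁ - (lam * (2 - sC) * ⟪e₂, f⟫_ℂ) • e₂ := by
  rw [comm_apply V hV f]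
  have hα : ⟪e₁, f⟫_ℂ = ⟪u, f⟫_ℂ + (sC - 3) * ⟪w, f⟫_ℂ := by
    simp only [e₁, inner_add_left, inner_smul_left, map_sub, conj_sC, Complex.conj_ofNat]
  have hβ : ⟪e₂, f⟫_ℂ = ⟪u, f⟫_ℂ - (sC + 3) * ⟪w, f⟫_ℂ := by
    simp only [e₂, inner_sub_left, inner_smul_left, map_add, conj_sC, Complex.conj_ofNat]
  rw [inner_sub_left, hα, hβ]
  simp only [e₁, e₂, lam]
  match_scalars
  · linear_combination (-(⟪u, f⟫_ℂ - ⟪w, f⟫_ℂ) / 3) * hsC_sq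
  · linear_combination (⟪u, f⟫_ℂ / 3 - ⟪w, f⟫_ℂ * sC ^ 2 / 3) * hsC_sq

lemma C_e1 : (adjoint V ∘L V - V ∘L adjoint V) e₁ = lam • e₁ := by
  rw [C_apply_eig V hV, inner_e11, inner_e21, mul_zero, zero_smul, sub_zero]
  congr 1
  linear_combination (-lam) * hsC_sq

omit hV in
lemma norm_lam : ‖lam‖ = sR / 6 := by
  rw [lam, sC]
  rw [show ((sR : ℂ) / 6) = (((sR / 6 : ℝ)) : ℂ) by push_cast; ring]
  rw [Complex.norm_real, Real.norm_eq_abs, abs_of_nonneg (div_nonneg hsR_nonneg (by norm_num))]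


omit hV in
lemma norm_2add : ‖(2:ℂ) + sC‖ = 2 + sR := by
  rw [sC, show (2:ℂ) + (sR:ℂ) = ((2 + sR : ℝ) : ℂ) by push_cast; ring, Complex.norm_real,
    Real.norm_eq_abs, abs_of_nonneg (by nlinarith [hsR_nonneg])]

omit hV in
lemma norm_2sub : ‖(2:ℂ) - sC‖ = 2 - sR := by
  rw [sC, show (2:ℂ) - (sR:ℂ) = ((2 - sR : ℝ) : ℂ) by push_cast; ring, Complex.norm_real,
    Real.norm_eq_abs, abs_of_nonneg (by nlinarith [hsR_lt_two])]

omit hV in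
lemma inv_norm_e1_sq : (‖e₁‖^2)⁻¹ = 2 + sR := by
  rw [norm_e1_sq]
  exact inv_eq_of_mul_eq_one_right (by nlinarith [hsR_sq])

omit hV in
lemma inv_norm_e2_sq : (‖e₂‖^2)⁻¹ = 2 - sR := by
  rw [norm_e2_sq]
  exact inv_eq_of_mul_eq_one_right (by nlinarith [hsR_sq])

noncomputable def ehat : Fin 2 → Lp ℂ 2 mu01 :=
  ![((‖e₁‖⁻¹ : ℝ) : ℂ) • e₁, ((‖e₂‖⁻¹ : ℝ) : ℂ) • e₂]

omit hV in
lemma orthonormal_ehat : Orthonormal ℂ ehat := by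
  rw [orthonormal_iff_ite]
  intro i j
  fin_cases i <;> fin_cases j <;>
    simp only [ehat, Matrix.cons_val_zero, Matrix.cons_val_one, Matrix.head_cons,
      inner_smul_left, inner_smul_right, inner_e11, inner_e12, inner_e21, inner_e22,
      Complex.conj_ofReal, mul_zero, zero_mul, if_true, if_false, Fin.mk_zero, Fin.mk_one]
  · rw [show ((‖e₁‖⁻¹:ℝ):ℂ) * (((‖e₁‖⁻¹:ℝ):ℂ) * ((2:ℂ) - sC)) = (((‖e₁‖^2)⁻¹ : ℝ) : ℂ) * ((2:ℂ) - sC)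
      by push_cast; ring]
    rw [inv_norm_e1_sq, sC]
    push_cast
    linear_combination -hsC_sq'
  · simp
  · simp
  · rw [show ((‖e₂‖⁻¹:ℝ):ℂ) * (((‖e₂‖⁻¹:ℝ):ℂ) * ((2:ℂ) + sC)) = (((‖e₂‖^2)⁻¹ : ℝ) : ℂ) * ((2:ℂ) + sC)
      by push_cast; ring]
    rw [inv_norm_e2_sq, sC]
    push_cast
    linear_combination -hsC_sq'

omit hV in
lemma bessel (f : Lp ℂ 2 mu01) :
    (2 + sR) * ‖⟪e₁, f⟫_ℂ‖^2 + (2 - sR) * ‖⟪e₂, f⟫_ℂ‖^2 ≤ ‖f‖^2 := by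
  have hsum := orthonormal_ehat.sum_inner_products_le f (s := Finset.univ)
  rw [Fin.sum_univ_two] at hsum
  have h0 : ‖⟪ehat 0, f⟫_ℂ‖^2 = (2 + sR) * ‖⟪e₁, f⟫_ℂ‖^2 := by
    simp only [ehat, Matrix.cons_val_zero, inner_smul_left, Complex.conj_ofReal]
    rw [norm_mul, Complex.norm_real, Real.norm_eq_abs, abs_of_nonneg (by positivity), mul_pow,
      inv_pow, inv_norm_e1_sq]
  have h1 : ‖⟪ehat 1, f⟫_ℂ‖^2 = (2 - sR) * ‖⟪e₂, f⟫_ℂ‖^2 := by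
    simp only [ehat, Matrix.cons_val_one, Matrix.head_cons, Matrix.cons_val_zero, inner_smul_left, Complex.conj_ofReal]
    rw [norm_mul, Complex.norm_real, Real.norm_eq_abs, abs_of_nonneg (by positivity), mul_pow,
      inv_pow, inv_norm_e2_sq]
  rw [h0, h1] at hsum
  exact hsum

lemma C_norm_le : ‖adjoint V ∘L V - V ∘L adjoint V‖ ≤ sR / 6 := by
  apply ContinuousLinearMap.opNorm_le_bound _ (div_nonneg hsR_nonneg (by norm_num))
  intro f
  have hb := bessel f
  have hCf := C_apply_eig V hV f
  have hnorm1 : ‖(lam * (2 + sC) * ⟪e₁, f⟫_ℂ) • e₁‖^2 = (1/12) * ((2 + sR) * ‖⟪e₁, f⟫_ℂ‖^2) := by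
    rw [norm_smul, mul_pow, norm_mul, norm_mul, norm_lam, norm_2add, norm_e1_sq]
    linear_combination (-(2 + sR) * (sR^2 - 1) / 36 * ‖⟪e₁, f⟫_ℂ‖^2) * hsR_sq
  have hnorm2 : ‖(lam * (2 - sC) * ⟪e₂, f⟫_ℂ) • e₂‖^2 = (1/12) * ((2 - sR) * ‖⟪e₂, f⟫_ℂ‖^2) := by
    rw [norm_smul, mul_pow, norm_mul, norm_mul, norm_lam, norm_2sub, norm_e2_sq]
    linear_combination (-(2 - sR) * (sR^2 - 1) / 36 * ‖⟪e₂, f⟫_ℂ‖^2) * hsR_sq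
  have hp : ‖(adjoint V ∘L V - V ∘L adjoint V) f‖^2
      = ‖(lam * (2 + sC) * ⟪e₁, f⟫_ℂ) • e₁‖^2 + ‖(lam * (2 - sC) * ⟪e₂, f⟫_ℂ) • e₂‖^2 := by
    rw [hCf, sub_eq_add_neg]
    have h0 : ⟪(lam * (2 + sC) * ⟪e₁, f⟫_ℂ) • e₁, -((lam * (2 - sC) * ⟪e₂, f⟫_ℂ) • e₂)⟫_ℂ = 0 := by
      rw [inner_neg_right, inner_smul_left, inner_smul_right, inner_e12]; ring
    have h := norm_add_sq_eq_norm_sq_add_norm_sq_of_inner_eq_zero _ _ h0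
    rw [norm_neg] at h
    rw [sq, sq, sq, h]
  have hsq : ‖(adjoint V ∘L V - V ∘L adjoint V) f‖^2 ≤ (sR/6 * ‖f‖)^2 := by
    rw [hp, hnorm1, hnorm2]
    have h12 : (sR/6 * ‖f‖)^2 = (1/12) * ‖f‖^2 := by
      linear_combination (‖f‖^2/36) * hsR_sq
    rw [h12]
    linarith [hb]
  have hnn : (0:ℝ) ≤ sR/6 * ‖f‖ := mul_nonneg (div_nonneg hsR_nonneg (by norm_num)) (norm_nonneg f)
  nlinarith [norm_nonneg ((adjoint V ∘L V - V ∘L adjoint V) f), hsq, hnn]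

lemma C_norm_ge : sR / 6 ≤ ‖adjoint V ∘L V - V ∘L adjoint V‖ := by
  have h := ContinuousLinearMap.ratio_le_opNorm (adjoint V ∘L V - V ∘L adjoint V) e₁
  rw [C_e1 V hV, norm_smul, norm_lam, mul_div_assoc, div_self (ne_of_gt norm_e1_pos),
    mul_one] at h
  exact h

end V2
end Volt


/-- For the Volterra integration operator `(V f)(x) = ∫₀ˣ f(t) dt` on `L²(0,1)`, the norm of
the self-commutator is `√3/6`. -/
theorem volterra_selfCommutator_norm
    (V : Lp ℂ 2 mu01 →L[ℂ] Lp ℂ 2 mu01)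
    (hV : ∀ f : Lp ℂ 2 mu01, ∀ᵐ x ∂mu01, V f x = ∫ t in Set.Ioo (0 : ℝ) x, f t) :
    ‖adjoint V ∘L V - V ∘L adjoint V‖ = Real.sqrt 3 / 6 := by
  have h := le_antisymm (Volt.C_norm_le V hV) (Volt.C_norm_ge V hV)
  rw [h]
  rfl
end

section
/- Let G be a nonempty compact convex subset of ℝ². For a unit vector u ∈ ℝ², let w_u(G) = sup_{x∈G} ⟨x, u⟩ − inf_{x∈G} ⟨x, u⟩ denote the width of G in direction u. Then the infimum over t ∈ [0, 2π) of the product w_{(cos t, sin t)}(G) · w_{(−sin t, cos t)}(G) of widths in two perpendicular directions is at most 2·S(G), where S(G) is the two-dimensional Lebesgue measure of G. -/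
set_option maxHeartbeats 1000000
set_option maxRecDepth 4000

open MeasureTheory Real

section Aux
open Set


lemma vol_stdTri : ENNReal.ofReal (1/2) ≤
    volume (convexHull ℝ {((0:ℝ),(0:ℝ)), (1,0), (0,1)}) := by
  have hsub : regionBetween (fun _ => (0:ℝ)) (fun x => 1 - x) (Ioo 0 1) ⊆
      convexHull ℝ {((0:ℝ),(0:ℝ)), (1,0), (0,1)} := by
    rintro ⟨x, y⟩ ⟨hx, hy⟩
    simp only [mem_Ioo] at hx hy
    have h0 : ((0:ℝ),(0:ℝ)) ∈ convexHull ℝ ({((0:ℝ),(0:ℝ)), (1,0), (0,1)} : Set (ℝ×ℝ)) :=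
      subset_convexHull ℝ _ (by simp)
    have h1 : ((1:ℝ),(0:ℝ)) ∈ convexHull ℝ ({((0:ℝ),(0:ℝ)), (1,0), (0,1)} : Set (ℝ×ℝ)) :=
      subset_convexHull ℝ _ (by simp)
    have h2 : ((0:ℝ),(1:ℝ)) ∈ convexHull ℝ ({((0:ℝ),(0:ℝ)), (1,0), (0,1)} : Set (ℝ×ℝ)) :=
      subset_convexHull ℝ _ (by simp)
    have hc := convex_convexHull ℝ ({((0:ℝ),(0:ℝ)), (1,0), (0,1)} : Set (ℝ×ℝ))
    have hxy : 0 < x + y := by linarith [hx.1, hy.1]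
    have hq : ((x/(x+y) : ℝ), (y/(x+y) : ℝ)) ∈
        convexHull ℝ ({((0:ℝ),(0:ℝ)), (1,0), (0,1)} : Set (ℝ×ℝ)) := by
      have := hc h1 h2 (div_nonneg hx.1.le hxy.le) (div_nonneg hy.1.le hxy.le)
        (by field_simp)
      simpa [Prod.ext_iff] using this
    have := hc h0 hq (by linarith [hx.2, hy.2, hy.1] : (0:ℝ) ≤ 1 - (x+y))
      (le_of_lt hxy) (by ring)
    have hx' : (x + y) * (x / (x + y)) = x := by field_simp
    have hy' : (x + y) * (y / (x + y)) = y := by field_simp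
    simpa [Prod.ext_iff, Prod.smul_def, smul_eq_mul, hx', hy'] using this
  calc ENNReal.ofReal (1/2)
      = volume (regionBetween (fun _ => (0:ℝ)) (fun x => 1 - x) (Ioo 0 1)) := by
        rw [Measure.volume_eq_prod, volume_regionBetween_eq_integral
          (integrableOn_const measure_Ioo_lt_top.ne)
          (((by fun_prop : Continuous fun x:ℝ => (1:ℝ) - x).continuousOn.integrableOn_compact isCompact_Icc).mono_set Ioo_subset_Icc_self)
          measurableSet_Ioo (fun x hx => by simp only [mem_Ioo] at hx; linarith [hx.2])]
        congr 1
        rw [show ((fun x => 1 - x) - fun _ => (0:ℝ)) = (fun x : ℝ => 1 - x) by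
          funext y; simp]
        rw [← integral_Ioc_eq_integral_Ioo, ← intervalIntegral.integral_of_le zero_le_one]
        rw [intervalIntegral.integral_sub intervalIntegrable_const
          intervalIntegral.intervalIntegrable_id, integral_id]
        simp
        norm_num
    _ ≤ _ := measure_mono hsub


lemma vol_tri (a b c : ℝ × ℝ) :
    ENNReal.ofReal (|(b.1 - a.1) * (c.2 - a.2) - (b.2 - a.2) * (c.1 - a.1)| / 2)
      ≤ volume (convexHull ℝ {a, b, c}) := by
  set v := b - a with hv
  set w := c - a with hw
  -- linear map sending (x,y) ↦ x•v + y•w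
  let L : (ℝ × ℝ) →ₗ[ℝ] (ℝ × ℝ) :=
    { toFun := fun p => p.1 • v + p.2 • w
      map_add' := by intro p q; simp [add_smul]; abel
      map_smul' := by intro r p; simp only [Prod.smul_fst, Prod.smul_snd, smul_eq_mul, RingHom.id_apply, smul_add, mul_smul] }
  have hdet : LinearMap.det L = v.1 * w.2 - v.2 * w.1 := by
    have : LinearMap.det L = Matrix.det
        (LinearMap.toMatrix (Module.Basis.finTwoProd ℝ) (Module.Basis.finTwoProd ℝ) L) :=
      (LinearMap.det_toMatrix _ _).symm
    rw [this, Matrix.det_fin_two]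
    simp [LinearMap.toMatrix_apply, Module.Basis.finTwoProd_zero, Module.Basis.finTwoProd_one, L]
    ring
  -- affine map x ↦ a + L x
  let A : (ℝ × ℝ) →ᵃ[ℝ] (ℝ × ℝ) :=
    { toFun := fun x => a + L x
      linear := L
      map_vadd' := by intro p q; simp [map_add]; abel }
  have himg : A '' (convexHull ℝ {((0:ℝ),(0:ℝ)), (1,0), (0,1)}) = convexHull ℝ {a, b, c} := by
    rw [AffineMap.image_convexHull]
    congr 1
    have h0 : A (0,0) = a := by simp [A, L]
    have h1 : A (1,0) = b := by
      simp [A, L, hv]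
    have h2 : A (0,1) = c := by
      simp [A, L, hw]
    simp only [Set.image_insert_eq, Set.image_singleton, h0, h1, h2]
  have hA : A '' (convexHull ℝ {((0:ℝ),(0:ℝ)), (1,0), (0,1)}) =
      (fun y => a + y) '' (L '' (convexHull ℝ {((0:ℝ),(0:ℝ)), (1,0), (0,1)})) := by
    rw [Set.image_image]; rfl
  have hvol : volume (convexHull ℝ {a, b, c})
      = ENNReal.ofReal |LinearMap.det L| *
        volume (convexHull ℝ {((0:ℝ),(0:ℝ)), (1,0), (0,1)}) := by
    rw [← himg, hA, Set.image_add_left, measure_preimage_add,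
      Measure.addHaar_image_linearMap]
  rw [hvol, hdet]
  calc ENNReal.ofReal (|(b.1 - a.1) * (c.2 - a.2) - (b.2 - a.2) * (c.1 - a.1)| / 2)
      = ENNReal.ofReal |v.1 * w.2 - v.2 * w.1| * ENNReal.ofReal (1/2) := by
        rw [← ENNReal.ofReal_mul (abs_nonneg _)]
        congr 1
        simp only [hv, hw, Prod.fst_sub, Prod.snd_sub]
        ring
    _ ≤ _ := mul_le_mul_right vol_stdTri _


lemma exists_angle (x y : ℝ) (h : x^2 + y^2 = 1) :
    ∃ t ∈ Set.Ico 0 (2*π), cos t = x ∧ sin t = y := by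
  have hx2 : x^2 ≤ 1 := by nlinarith [sq_nonneg y]
  have hx1 : -1 ≤ x := by nlinarith
  have hx1' : x ≤ 1 := by nlinarith
  have hy2 : √(1 - x^2) = |y| := by
    rw [show 1 - x^2 = y^2 by linarith, Real.sqrt_sq_eq_abs]
  rcases le_or_gt 0 y with hy | hy
  · refine ⟨arccos x, ⟨arccos_nonneg x, lt_of_le_of_lt (arccos_le_pi x) ?_⟩,
      cos_arccos hx1 hx1', by rw [sin_arccos, hy2, abs_of_nonneg hy]⟩
    nlinarith [pi_pos]
  · refine ⟨2*π - arccos x, ⟨?_, ?_⟩, by rw [cos_two_pi_sub, cos_arccos hx1 hx1'],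
      by rw [sin_two_pi_sub, sin_arccos, hy2, abs_of_neg hy, neg_neg]⟩
    · nlinarith [arccos_le_pi x, pi_pos]
    · have : arccos x ≠ 0 := by
        intro h0
        have : (1:ℝ) ≤ x := arccos_eq_zero.mp h0
        have : x = 1 := le_antisymm hx1' this
        subst this
        nlinarith
      have := arccos_nonneg x
      have : 0 < arccos x := lt_of_le_of_ne this (Ne.symm ‹_›)
      linarith

end Aux

open Set in
/-- For a nonempty compact convex set `G ⊆ ℝ²`, the infimum over directions of the product of
the widths of `G` in two perpendicular directions is at most twice the area of `G`. -/
theorem inf_width_mul_width_le_two_mul_area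
    (G : Set (ℝ × ℝ)) (hne : G.Nonempty) (hcomp : IsCompact G) (hconv : Convex ℝ G) :
    sInf ((fun t : ℝ =>
        (sSup ((fun p : ℝ × ℝ => p.1 * cos t + p.2 * sin t) '' G) -
          sInf ((fun p : ℝ × ℝ => p.1 * cos t + p.2 * sin t) '' G)) *
        (sSup ((fun p : ℝ × ℝ => p.1 * (-sin t) + p.2 * cos t) '' G) -
          sInf ((fun p : ℝ × ℝ => p.1 * (-sin t) + p.2 * cos t) '' G))) ''
      Set.Ico 0 (2 * π))
    ≤ 2 * (volume G).toReal := by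
  -- widths are nonnegative
  have wnn : ∀ f : ℝ × ℝ → ℝ, Continuous f → 0 ≤ sSup (f '' G) - sInf (f '' G) := by
    intro f hf
    obtain ⟨x, hx⟩ := hne
    have h1 : sInf (f '' G) ≤ f x := csInf_le (hcomp.image hf).bddBelow ⟨x, hx, rfl⟩
    have h2 : f x ≤ sSup (f '' G) := le_csSup (hcomp.image hf).bddAbove ⟨x, hx, rfl⟩
    linarith
  have hcont1 : ∀ t : ℝ, Continuous fun p : ℝ × ℝ => p.1 * cos t + p.2 * sin t := by
    intro t; fun_prop
  have hcont2 : ∀ t : ℝ, Continuous fun p : ℝ × ℝ => p.1 * (-sin t) + p.2 * cos t := by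
    intro t; fun_prop
  have hbdd : BddBelow ((fun t : ℝ =>
        (sSup ((fun p : ℝ × ℝ => p.1 * cos t + p.2 * sin t) '' G) -
          sInf ((fun p : ℝ × ℝ => p.1 * cos t + p.2 * sin t) '' G)) *
        (sSup ((fun p : ℝ × ℝ => p.1 * (-sin t) + p.2 * cos t) '' G) -
          sInf ((fun p : ℝ × ℝ => p.1 * (-sin t) + p.2 * cos t) '' G))) ''
      Set.Ico 0 (2 * π)) := by
    refine ⟨0, ?_⟩
    rintro z ⟨t, _, rfl⟩
    exact mul_nonneg (wnn _ (hcont1 t)) (wnn _ (hcont2 t))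
  -- it suffices to bound the value at one point t₀ of Ico 0 (2π)
  have key : ∀ t₀ ∈ Set.Ico 0 (2*π),
      (sSup ((fun p : ℝ × ℝ => p.1 * cos t₀ + p.2 * sin t₀) '' G) -
          sInf ((fun p : ℝ × ℝ => p.1 * cos t₀ + p.2 * sin t₀) '' G)) *
        (sSup ((fun p : ℝ × ℝ => p.1 * (-sin t₀) + p.2 * cos t₀) '' G) -
          sInf ((fun p : ℝ × ℝ => p.1 * (-sin t₀) + p.2 * cos t₀) '' G)) ≤
        2 * (volume G).toReal →
      sInf ((fun t : ℝ =>
        (sSup ((fun p : ℝ × ℝ => p.1 * cos t + p.2 * sin t) '' G) -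
          sInf ((fun p : ℝ × ℝ => p.1 * cos t + p.2 * sin t) '' G)) *
        (sSup ((fun p : ℝ × ℝ => p.1 * (-sin t) + p.2 * cos t) '' G) -
          sInf ((fun p : ℝ × ℝ => p.1 * (-sin t) + p.2 * cos t) '' G))) ''
        Set.Ico 0 (2 * π)) ≤ 2 * (volume G).toReal := by
    intro t₀ ht₀ hval
    exact le_trans (csInf_le hbdd ⟨t₀, ht₀, rfl⟩) hval
  -- pick a diametral pair
  obtain ⟨⟨a, b⟩, habG, hmax⟩ := (hcomp.prod hcomp).exists_isMaxOn
    (hne.prod hne)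
    (by fun_prop :
      Continuous fun pq : (ℝ×ℝ)×(ℝ×ℝ) =>
        (pq.1.1 - pq.2.1)^2 + (pq.1.2 - pq.2.2)^2).continuousOn
  obtain ⟨haG, hbG⟩ : a ∈ G ∧ b ∈ G := by
    simpa [Set.mem_prod] using habG
  set M : ℝ := (a.1 - b.1)^2 + (a.2 - b.2)^2 with hM
  have hmax' : ∀ x ∈ G, ∀ y ∈ G, (x.1 - y.1)^2 + (x.2 - y.2)^2 ≤ M := by
    intro x hx y hy
    exact hmax (Set.mk_mem_prod hx hy)
  have hM0 : 0 ≤ M := by positivity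
  rcases eq_or_lt_of_le hM0 with hM0' | hMpos
  · -- degenerate: G is a single point
    have hGa : ∀ x ∈ G, x = a := by
      intro x hx
      have := hmax' x hx a haG
      have h1 : (x.1 - a.1)^2 + (x.2 - a.2)^2 = 0 := by nlinarith [sq_nonneg (x.1 - a.1), sq_nonneg (x.2 - a.2)]
      have hx1 : x.1 = a.1 := by nlinarith [sq_nonneg (x.1 - a.1), sq_nonneg (x.2 - a.2)]
      have hx2 : x.2 = a.2 := by nlinarith [sq_nonneg (x.1 - a.1), sq_nonneg (x.2 - a.2)]
      exact Prod.ext hx1 hx2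
    have hGeq : G = {a} := Set.eq_singleton_iff_nonempty_unique_mem.2 ⟨hne, hGa⟩
    refine key 0 ⟨le_refl 0, by positivity⟩ ?_
    rw [hGeq]
    simp only [Set.image_singleton, csSup_singleton, csInf_singleton, sub_self, zero_mul]
    positivity
  · -- nondegenerate
    set d : ℝ := Real.sqrt M with hd
    have hdpos : 0 < d := Real.sqrt_pos.2 hMpos
    have hd2 : d^2 = M := Real.sq_sqrt hM0
    set u1 : ℝ := (b.1 - a.1)/d with hu1
    set u2 : ℝ := (b.2 - a.2)/d with hu2
    have hunit : u1^2 + u2^2 = 1 := by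
      rw [hu1, hu2]
      field_simp
      rw [hd2, hM]; ring
    obtain ⟨t₀, ht₀, hcos, hsin⟩ := exists_angle u1 u2 hunit
    refine key t₀ ht₀ ?_
    rw [hcos, hsin]
    set f : ℝ × ℝ → ℝ := fun p => p.1 * u1 + p.2 * u2 with hf
    set g : ℝ × ℝ → ℝ := fun p => p.1 * (-u2) + p.2 * u1 with hg
    have hfc : Continuous f := by fun_prop
    have hgc : Continuous g := by fun_prop
    -- width in direction u is at most d
    have hfd : ∀ x ∈ G, ∀ y ∈ G, f x - f y ≤ d := by
      intro x hx y hy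
      have hq := hmax' x hx y hy
      have hcs : (f x - f y)^2 ≤ ((x.1-y.1)^2 + (x.2-y.2)^2) * (u1^2 + u2^2) := by
        simp only [hf]
        nlinarith [sq_nonneg ((x.1-y.1)*u2 - (x.2-y.2)*u1)]
      rw [hunit, mul_one] at hcs
      nlinarith [hdpos.le, hd2]
    have hwf : sSup (f '' G) - sInf (f '' G) ≤ d := by
      have hFne : (f '' G).Nonempty := hne.image f
      have h1 : sSup (f '' G) ≤ sInf (f '' G) + d := by
        refine csSup_le hFne ?_
        rintro z ⟨x, hx, rfl⟩
        have h2 : f x - d ≤ sInf (f '' G) := by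
          refine le_csInf hFne ?_
          rintro w ⟨y, hy, rfl⟩
          linarith [hfd x hx y hy]
        linarith
      linarith
    -- extreme points in direction v
    obtain ⟨p, hpG, hpmax⟩ := hcomp.exists_isMaxOn hne hgc.continuousOn
    obtain ⟨q, hqG, hqmin⟩ := hcomp.exists_isMinOn hne hgc.continuousOn
    have hsup : sSup (g '' G) = g p :=
      IsGreatest.csSup_eq ⟨⟨p, hpG, rfl⟩, by rintro z ⟨x, hx, rfl⟩; exact hpmax hx⟩
    have hinf : sInf (g '' G) = g q :=
      IsLeast.csInf_eq ⟨⟨q, hqG, rfl⟩, by rintro z ⟨x, hx, rfl⟩; exact hqmin hx⟩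
    have hba1 : b.1 - a.1 = d * u1 := by rw [hu1]; field_simp
    have hba2 : b.2 - a.2 = d * u2 := by rw [hu2]; field_simp
    have hgab : g a = g b := by
      have h1 : b.1 = a.1 + d*u1 := by linarith
      have h2 : b.2 = a.2 + d*u2 := by linarith
      simp only [hg, h1, h2]; ring
    have hgap : g a ≤ g p := hpmax haG
    have hgaq : g q ≤ g a := hqmin haG
    -- the two triangles
    have hglin : IsLinearMap ℝ g := by
      constructor
      · intro x y; simp only [hg, Prod.fst_add, Prod.snd_add]; ring
      · intro c x; simp only [hg, Prod.smul_fst, Prod.smul_snd, smul_eq_mul]; ring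
    have harea : ENNReal.ofReal (d * (g p - g q) / 2) ≤ volume G := by
      -- two triangles abp and abq
      have hT1G : convexHull ℝ {a, b, p} ⊆ G :=
        convexHull_min (by simp [Set.insert_subset_iff, haG, hbG, hpG]) hconv
      have hT2G : convexHull ℝ {a, b, q} ⊆ G :=
        convexHull_min (by simp [Set.insert_subset_iff, haG, hbG, hqG]) hconv
      -- triangle area lower bounds
      have hdet1 : (b.1 - a.1) * (p.2 - a.2) - (b.2 - a.2) * (p.1 - a.1)
          = d * (g p - g a) := by
        rw [hba1, hba2]; simp only [hg]; ring
      have hdet2 : (b.1 - a.1) * (q.2 - a.2) - (b.2 - a.2) * (q.1 - a.1)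
          = d * (g q - g a) := by
        rw [hba1, hba2]; simp only [hg]; ring
      have hv1 : ENNReal.ofReal (d * (g p - g a) / 2) ≤ volume (convexHull ℝ {a, b, p}) := by
        have := vol_tri a b p
        rwa [hdet1, abs_of_nonneg (mul_nonneg hdpos.le (by linarith))] at this
      have hv2 : ENNReal.ofReal (d * (g a - g q) / 2) ≤ volume (convexHull ℝ {a, b, q}) := by
        have := vol_tri a b q
        rwa [hdet2, show d * (g q - g a) = -(d * (g a - g q)) by ring, abs_neg,
          abs_of_nonneg (mul_nonneg hdpos.le (by linarith))] at this
      -- triangles lie in opposite halfplanes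
      have hT1half : convexHull ℝ {a, b, p} ⊆ {x : ℝ × ℝ | g a ≤ g x} :=
        convexHull_min (by
          simp only [Set.insert_subset_iff, Set.singleton_subset_iff, Set.mem_setOf_eq]
          exact ⟨le_refl _, hgab.le, hgap⟩) (convex_halfSpace_ge hglin (g a))
      have hT2half : convexHull ℝ {a, b, q} ⊆ {x : ℝ × ℝ | g x ≤ g a} :=
        convexHull_min (by
          simp only [Set.insert_subset_iff, Set.singleton_subset_iff, Set.mem_setOf_eq]
          exact ⟨le_refl _, hgab.ge, hgaq⟩) (convex_halfSpace_le hglin (g a))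
      -- the separating line is null
      have hline : volume {x : ℝ × ℝ | g x = g a} = 0 := by
        set φ : (ℝ × ℝ) →ₗ[ℝ] ℝ := IsLinearMap.mk' g hglin with hφ
        have hker : LinearMap.ker φ ≠ ⊤ := by
          intro htop
          have hm : ((-u2, u1) : ℝ × ℝ) ∈ LinearMap.ker φ := htop ▸ Submodule.mem_top
          rw [LinearMap.mem_ker] at hm
          have : g ((-u2, u1) : ℝ × ℝ) = 0 := hm
          simp only [hg] at this
          nlinarith [hunit]
        have himg : {x : ℝ × ℝ | g x = g a}
            = (fun y => a + y) '' (LinearMap.ker φ : Set (ℝ × ℝ)) := by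
          ext x
          simp only [Set.mem_setOf_eq, Set.mem_image, SetLike.mem_coe, LinearMap.mem_ker]
          constructor
          · intro hx
            refine ⟨x - a, ?_, by abel⟩
            have : φ (x - a) = φ x - φ a := map_sub φ x a
            rw [this]
            have hgx : φ x = g x := rfl
            have hga : φ a = g a := rfl
            rw [hgx, hga, hx, sub_self]
          · rintro ⟨y, hy, rfl⟩
            have : φ (a + y) = φ a + φ y := map_add φ a y
            have hgy : g (a + y) = g a + g y := this
            rw [hgy, show g y = φ y from rfl, hy, add_zero]
        rw [himg, Set.image_add_left, measure_preimage_add]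
        exact Measure.addHaar_submodule volume _ hker
      -- disjointified triangles
      have hmeas2 : MeasurableSet (convexHull ℝ {a, b, q} ∩ {x : ℝ × ℝ | g x < g a}) := by
        refine MeasurableSet.inter ?_ ?_
        · exact ((Set.toFinite ({a, b, q} : Set (ℝ × ℝ))).isCompact_convexHull ℝ).isClosed.measurableSet
        · exact (isOpen_lt hgc continuous_const).measurableSet
      have hsub1 : convexHull ℝ {a, b, p}
          ⊆ (convexHull ℝ {a, b, p} ∩ {x : ℝ × ℝ | g a < g x}) ∪ {x : ℝ × ℝ | g x = g a} := by
        intro x hx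
        have hle : g a ≤ g x := hT1half hx
        rcases hle.lt_or_eq with h | h
        · exact Or.inl ⟨hx, h⟩
        · exact Or.inr h.symm
      have hsub2 : convexHull ℝ {a, b, q}
          ⊆ (convexHull ℝ {a, b, q} ∩ {x : ℝ × ℝ | g x < g a}) ∪ {x : ℝ × ℝ | g x = g a} := by
        intro x hx
        have hle : g x ≤ g a := hT2half hx
        rcases hle.lt_or_eq with h | h
        · exact Or.inl ⟨hx, h⟩
        · exact Or.inr h
      have hv1' : ENNReal.ofReal (d * (g p - g a) / 2)
          ≤ volume (convexHull ℝ {a, b, p} ∩ {x : ℝ × ℝ | g a < g x}) := by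
        refine le_trans hv1 ?_
        calc volume (convexHull ℝ {a, b, p})
            ≤ volume ((convexHull ℝ {a, b, p} ∩ {x : ℝ × ℝ | g a < g x})
              ∪ {x : ℝ × ℝ | g x = g a}) := measure_mono hsub1
          _ ≤ volume (convexHull ℝ {a, b, p} ∩ {x : ℝ × ℝ | g a < g x})
              + volume {x : ℝ × ℝ | g x = g a} := measure_union_le _ _
          _ = volume (convexHull ℝ {a, b, p} ∩ {x : ℝ × ℝ | g a < g x}) := by
              rw [hline, add_zero]
      have hv2' : ENNReal.ofReal (d * (g a - g q) / 2)
          ≤ volume (convexHull ℝ {a, b, q} ∩ {x : ℝ × ℝ | g x < g a}) := by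
        refine le_trans hv2 ?_
        calc volume (convexHull ℝ {a, b, q})
            ≤ volume ((convexHull ℝ {a, b, q} ∩ {x : ℝ × ℝ | g x < g a})
              ∪ {x : ℝ × ℝ | g x = g a}) := measure_mono hsub2
          _ ≤ volume (convexHull ℝ {a, b, q} ∩ {x : ℝ × ℝ | g x < g a})
              + volume {x : ℝ × ℝ | g x = g a} := measure_union_le _ _
          _ = volume (convexHull ℝ {a, b, q} ∩ {x : ℝ × ℝ | g x < g a}) := by
              rw [hline, add_zero]
      have hdisj : Disjoint (convexHull ℝ {a, b, p} ∩ {x : ℝ × ℝ | g a < g x})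
          (convexHull ℝ {a, b, q} ∩ {x : ℝ × ℝ | g x < g a}) := by
        rw [Set.disjoint_left]
        rintro x ⟨-, h1⟩ ⟨-, h2⟩
        simp only [Set.mem_setOf_eq] at h1 h2
        linarith
      calc ENNReal.ofReal (d * (g p - g q) / 2)
          = ENNReal.ofReal (d * (g p - g a) / 2) + ENNReal.ofReal (d * (g a - g q) / 2) := by
            rw [← ENNReal.ofReal_add (div_nonneg (mul_nonneg hdpos.le (sub_nonneg.2 hgap)) two_pos.le) (div_nonneg (mul_nonneg hdpos.le (sub_nonneg.2 hgaq)) two_pos.le)]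
            congr 1; ring
        _ ≤ volume (convexHull ℝ {a, b, p} ∩ {x : ℝ × ℝ | g a < g x})
            + volume (convexHull ℝ {a, b, q} ∩ {x : ℝ × ℝ | g x < g a}) :=
            add_le_add hv1' hv2'
        _ = volume ((convexHull ℝ {a, b, p} ∩ {x : ℝ × ℝ | g a < g x})
            ∪ (convexHull ℝ {a, b, q} ∩ {x : ℝ × ℝ | g x < g a})) :=
            (measure_union hdisj hmeas2).symm
        _ ≤ volume G := measure_mono (Set.union_subset
            (Set.Subset.trans Set.inter_subset_left hT1G)
            (Set.Subset.trans Set.inter_subset_left hT2G))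
    clear_value M d u1 u2 f g
    have hfin : volume G ≠ ⊤ := hcomp.measure_lt_top.ne
    have harea' : d * (g p - g q) / 2 ≤ (volume G).toReal := by
      have := ENNReal.toReal_mono hfin harea
      rwa [ENNReal.toReal_ofReal (by nlinarith [hdpos.le])] at this
    rw [hsup, hinf]
    calc (sSup (f '' G) - sInf (f '' G)) * (g p - g q)
        ≤ d * (g p - g q) := by
          apply mul_le_mul_of_nonneg_right hwf; linarith
      _ ≤ 2 * (volume G).toReal := by linarith
end

section
/- Let a, b > 0 and let G = {(x, y) ∈ ℝ² : x²/a² + y²/b² ≤ 1} be the closed elliptical disk with semi-axes a and b. Then the width of G in the direction (cos t, sin t) equals 2√(a²cos²t + b²sin²t), and the minimum over t ∈ [0, 2π) of the product of the widths of G in the perpendicular directions (cos t, sin t) and (−sin t, cos t) equals 4ab, which equals (4/π)·S(G) where S(G) = πab is the area of G. -/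
open MeasureTheory Real

lemma ellipse_pos_aux (a b c s : ℝ) (ha : 0 < a) (hb : 0 < b) (h : c ^ 2 + s ^ 2 = 1) :
    0 < a ^ 2 * c ^ 2 + b ^ 2 * s ^ 2 := by
  have h1 : min (a ^ 2) (b ^ 2) * (c ^ 2 + s ^ 2) ≤ a ^ 2 * c ^ 2 + b ^ 2 * s ^ 2 := by
    have hmc := min_le_left (a ^ 2) (b ^ 2)
    have hms := min_le_right (a ^ 2) (b ^ 2)
    nlinarith [sq_nonneg c, sq_nonneg s]
  have h2 : 0 < min (a ^ 2) (b ^ 2) := lt_min (pow_pos ha 2) (pow_pos hb 2)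
  nlinarith

lemma ellipse_isGreatest (a b c s : ℝ) (ha : 0 < a) (hb : 0 < b) (h : c ^ 2 + s ^ 2 = 1) :
    IsGreatest ((fun p : ℝ × ℝ => p.1 * c + p.2 * s) ''
      {p : ℝ × ℝ | p.1 ^ 2 / a ^ 2 + p.2 ^ 2 / b ^ 2 ≤ 1})
      (Real.sqrt (a ^ 2 * c ^ 2 + b ^ 2 * s ^ 2)) := by
  set M := Real.sqrt (a ^ 2 * c ^ 2 + b ^ 2 * s ^ 2) with hM
  have hP : 0 < a ^ 2 * c ^ 2 + b ^ 2 * s ^ 2 := ellipse_pos_aux a b c s ha hb h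
  have hM0 : 0 < M := Real.sqrt_pos.mpr hP
  have hMsq : M ^ 2 = a ^ 2 * c ^ 2 + b ^ 2 * s ^ 2 := Real.sq_sqrt hP.le
  constructor
  · refine ⟨(a ^ 2 * c / M, b ^ 2 * s / M), ?_, ?_⟩
    · show (a ^ 2 * c / M) ^ 2 / a ^ 2 + (b ^ 2 * s / M) ^ 2 / b ^ 2 ≤ 1
      have e1 : (a ^ 2 * c / M) ^ 2 / a ^ 2 + (b ^ 2 * s / M) ^ 2 / b ^ 2
          = (a ^ 2 * c ^ 2 + b ^ 2 * s ^ 2) / M ^ 2 := by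
        field_simp
      rw [e1, ← hMsq, div_self (by positivity)]
    · show a ^ 2 * c / M * c + b ^ 2 * s / M * s = M
      have e2 : a ^ 2 * c / M * c + b ^ 2 * s / M * s
          = (a ^ 2 * c ^ 2 + b ^ 2 * s ^ 2) / M := by
        field_simp
      rw [e2, ← hMsq, sq, mul_div_assoc, div_self hM0.ne', mul_one]
  · rintro x ⟨p, hp, rfl⟩
    simp only [Set.mem_setOf_eq] at hp
    have hp' : p.1 ^ 2 * b ^ 2 + p.2 ^ 2 * a ^ 2 ≤ a ^ 2 * b ^ 2 := by
      have h1 : (0:ℝ) < a ^ 2 := by positivity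
      have h2 : (0:ℝ) < b ^ 2 := by positivity
      have := hp
      rw [div_add_div _ _ h1.ne' h2.ne', div_le_one (by positivity)] at this
      linarith
    have hcs : (p.1 * c + p.2 * s) ^ 2 ≤ a ^ 2 * c ^ 2 + b ^ 2 * s ^ 2 := by
      nlinarith [sq_nonneg (p.1 * b * (b * s) - p.2 * a * (a * c)), sq_nonneg (a * c),
        sq_nonneg (b * s), mul_pos (pow_pos ha 2) (pow_pos hb 2), hp',
        mul_nonneg (mul_nonneg (sq_nonneg a) (sq_nonneg b)) (sq_nonneg (p.1 * c + p.2 * s))]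
    have habs : |p.1 * c + p.2 * s| ≤ M := by
      have hcs' : (p.1 * c + p.2 * s) ^ 2 ≤ M ^ 2 := by rw [hMsq]; exact hcs
      have := Real.sqrt_le_sqrt hcs'
      rwa [Real.sqrt_sq_eq_abs, Real.sqrt_sq hM0.le] at this
    exact (le_abs_self _).trans habs

lemma ellipse_symm (a b : ℝ) (p : ℝ × ℝ)
    (hp : p ∈ {p : ℝ × ℝ | p.1 ^ 2 / a ^ 2 + p.2 ^ 2 / b ^ 2 ≤ 1}) :
    (-p.1, -p.2) ∈ {p : ℝ × ℝ | p.1 ^ 2 / a ^ 2 + p.2 ^ 2 / b ^ 2 ≤ 1} := by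
  simpa using hp

lemma ellipse_isLeast (a b c s : ℝ) (ha : 0 < a) (hb : 0 < b) (h : c ^ 2 + s ^ 2 = 1) :
    IsLeast ((fun p : ℝ × ℝ => p.1 * c + p.2 * s) ''
      {p : ℝ × ℝ | p.1 ^ 2 / a ^ 2 + p.2 ^ 2 / b ^ 2 ≤ 1})
      (-Real.sqrt (a ^ 2 * c ^ 2 + b ^ 2 * s ^ 2)) := by
  obtain ⟨⟨p, hp, hpv⟩, hub⟩ := ellipse_isGreatest a b c s ha hb h
  dsimp only at hpv
  constructor
  · refine ⟨(-p.1, -p.2), ellipse_symm a b p hp, ?_⟩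
    dsimp only
    linarith
  · rintro x ⟨q, hq, rfl⟩
    have := hub ⟨(-q.1, -q.2), ellipse_symm a b q hq, rfl⟩
    dsimp only at this ⊢
    linarith

lemma ellipse_width (a b c s : ℝ) (ha : 0 < a) (hb : 0 < b) (h : c ^ 2 + s ^ 2 = 1) :
    sSup ((fun p : ℝ × ℝ => p.1 * c + p.2 * s) ''
        {p : ℝ × ℝ | p.1 ^ 2 / a ^ 2 + p.2 ^ 2 / b ^ 2 ≤ 1}) -
      sInf ((fun p : ℝ × ℝ => p.1 * c + p.2 * s) ''
        {p : ℝ × ℝ | p.1 ^ 2 / a ^ 2 + p.2 ^ 2 / b ^ 2 ≤ 1})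
      = 2 * Real.sqrt (a ^ 2 * c ^ 2 + b ^ 2 * s ^ 2) := by
  rw [(ellipse_isGreatest a b c s ha hb h).csSup_eq,
    (ellipse_isLeast a b c s ha hb h).csInf_eq]
  ring

/-- For the solid ellipse `G = {(x,y) : x²/a² + y²/b² ≤ 1}` with `a, b > 0`: the width of `G`
in direction `(cos t, sin t)` is `2√(a²cos²t + b²sin²t)`; the minimum over directions of the
product of the widths in two perpendicular directions is `4ab`; and this equals
`(4/π)·S(G)` with `S(G) = πab`. -/
theorem ellipse_width_product (a b : ℝ) (ha : 0 < a) (hb : 0 < b) :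
    (∀ t : ℝ,
      sSup ((fun p : ℝ × ℝ => p.1 * cos t + p.2 * sin t) ''
          {p : ℝ × ℝ | p.1 ^ 2 / a ^ 2 + p.2 ^ 2 / b ^ 2 ≤ 1}) -
        sInf ((fun p : ℝ × ℝ => p.1 * cos t + p.2 * sin t) ''
          {p : ℝ × ℝ | p.1 ^ 2 / a ^ 2 + p.2 ^ 2 / b ^ 2 ≤ 1})
      = 2 * Real.sqrt (a ^ 2 * cos t ^ 2 + b ^ 2 * sin t ^ 2)) ∧
    sInf ((fun t : ℝ =>
        (sSup ((fun p : ℝ × ℝ => p.1 * cos t + p.2 * sin t) ''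
            {p : ℝ × ℝ | p.1 ^ 2 / a ^ 2 + p.2 ^ 2 / b ^ 2 ≤ 1}) -
          sInf ((fun p : ℝ × ℝ => p.1 * cos t + p.2 * sin t) ''
            {p : ℝ × ℝ | p.1 ^ 2 / a ^ 2 + p.2 ^ 2 / b ^ 2 ≤ 1})) *
        (sSup ((fun p : ℝ × ℝ => p.1 * (-sin t) + p.2 * cos t) ''
            {p : ℝ × ℝ | p.1 ^ 2 / a ^ 2 + p.2 ^ 2 / b ^ 2 ≤ 1}) -
          sInf ((fun p : ℝ × ℝ => p.1 * (-sin t) + p.2 * cos t) ''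
            {p : ℝ × ℝ | p.1 ^ 2 / a ^ 2 + p.2 ^ 2 / b ^ 2 ≤ 1}))) ''
      Set.Ico 0 (2 * π))
      = 4 * a * b ∧
    (volume {p : ℝ × ℝ | p.1 ^ 2 / a ^ 2 + p.2 ^ 2 / b ^ 2 ≤ 1}).toReal = π * a * b ∧
    4 * a * b
      = (4 / π) * (volume {p : ℝ × ℝ | p.1 ^ 2 / a ^ 2 + p.2 ^ 2 / b ^ 2 ≤ 1}).toReal := by
  have hw1 : ∀ t : ℝ,
      sSup ((fun p : ℝ × ℝ => p.1 * cos t + p.2 * sin t) ''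
          {p : ℝ × ℝ | p.1 ^ 2 / a ^ 2 + p.2 ^ 2 / b ^ 2 ≤ 1}) -
        sInf ((fun p : ℝ × ℝ => p.1 * cos t + p.2 * sin t) ''
          {p : ℝ × ℝ | p.1 ^ 2 / a ^ 2 + p.2 ^ 2 / b ^ 2 ≤ 1})
      = 2 * Real.sqrt (a ^ 2 * cos t ^ 2 + b ^ 2 * sin t ^ 2) := fun t =>
    ellipse_width a b (cos t) (sin t) ha hb (by rw [Real.cos_sq_add_sin_sq])
  have hw2 : ∀ t : ℝ,
      sSup ((fun p : ℝ × ℝ => p.1 * (-sin t) + p.2 * cos t) ''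
          {p : ℝ × ℝ | p.1 ^ 2 / a ^ 2 + p.2 ^ 2 / b ^ 2 ≤ 1}) -
        sInf ((fun p : ℝ × ℝ => p.1 * (-sin t) + p.2 * cos t) ''
          {p : ℝ × ℝ | p.1 ^ 2 / a ^ 2 + p.2 ^ 2 / b ^ 2 ≤ 1})
      = 2 * Real.sqrt (a ^ 2 * sin t ^ 2 + b ^ 2 * cos t ^ 2) := fun t => by
    have := ellipse_width a b (-sin t) (cos t) ha hb
      (by rw [neg_pow, Even.neg_one_pow (by norm_num : Even 2), one_mul, Real.sin_sq_add_cos_sq])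
    rwa [neg_pow, Even.neg_one_pow (by norm_num : Even 2), one_mul] at this
  -- volume of the ellipse
  have hDmeas : MeasurableSet {p : ℝ × ℝ | p.1 ^ 2 + p.2 ^ 2 ≤ 1} :=
    (isClosed_le ((continuous_fst.pow 2).add (continuous_snd.pow 2)) continuous_const).measurableSet
  have hDvol : volume {p : ℝ × ℝ | p.1 ^ 2 + p.2 ^ 2 ≤ 1} = ENNReal.ofReal π := by
    have hmp := Complex.volume_preserving_equiv_real_prod.measure_preimage
      hDmeas.nullMeasurableSet
    have hpre : Complex.measurableEquivRealProd ⁻¹' {p : ℝ × ℝ | p.1 ^ 2 + p.2 ^ 2 ≤ 1}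
        = Metric.closedBall (0 : ℂ) 1 := by
      ext z
      simp only [Set.mem_preimage, Complex.measurableEquivRealProd_apply, Set.mem_setOf_eq,
        Metric.mem_closedBall, Complex.dist_eq, sub_zero]
      have h2 : ‖z‖ ^ 2 = z.re ^ 2 + z.im ^ 2 := by
        rw [Complex.sq_norm, Complex.normSq_apply]; ring
      constructor
      · intro hz
        nlinarith [norm_nonneg z]
      · intro hz
        nlinarith [norm_nonneg z]
    rw [← hmp, hpre, Complex.volume_closedBall]
    rw [← NNReal.coe_real_pi, ENNReal.ofReal_coe_nnreal]
    norm_num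
  have hEvol : volume {p : ℝ × ℝ | p.1 ^ 2 / a ^ 2 + p.2 ^ 2 / b ^ 2 ≤ 1}
      = ENNReal.ofReal a * ENNReal.ofReal b * ENNReal.ofReal π := by
    have hfa : Measurable (fun x : ℝ => a⁻¹ * x) := measurable_const_mul _
    have hfb : Measurable (fun x : ℝ => b⁻¹ * x) := measurable_const_mul _
    have hT : Measurable (Prod.map (fun x : ℝ => a⁻¹ * x) (fun x : ℝ => b⁻¹ * x)) :=
      hfa.prodMap hfb
    have hset : {p : ℝ × ℝ | p.1 ^ 2 / a ^ 2 + p.2 ^ 2 / b ^ 2 ≤ 1}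
        = Prod.map (fun x : ℝ => a⁻¹ * x) (fun x : ℝ => b⁻¹ * x) ⁻¹'
          {p : ℝ × ℝ | p.1 ^ 2 + p.2 ^ 2 ≤ 1} := by
      ext p
      simp only [Set.mem_setOf_eq, Set.mem_preimage, Prod.map_fst, Prod.map_snd]
      have harith : (a⁻¹ * p.1) ^ 2 + (b⁻¹ * p.2) ^ 2 = p.1 ^ 2 / a ^ 2 + p.2 ^ 2 / b ^ 2 := by
        field_simp
      rw [harith]
    rw [hset, ← Measure.map_apply hT hDmeas, Measure.volume_eq_prod,
      ← Measure.map_prod_map _ _ hfa hfb,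
      Real.map_volume_mul_left (inv_ne_zero ha.ne'),
      Real.map_volume_mul_left (inv_ne_zero hb.ne'), inv_inv, inv_inv,
      abs_of_pos ha, abs_of_pos hb,
      Measure.prod_apply hDmeas, lintegral_smul_measure]
    simp_rw [Measure.smul_apply, smul_eq_mul]
    rw [lintegral_const_mul _ (measurable_measure_prodMk_left hDmeas),
      ← Measure.prod_apply hDmeas, ← Measure.volume_eq_prod, hDvol]
    ring
  have hvol : (volume {p : ℝ × ℝ | p.1 ^ 2 / a ^ 2 + p.2 ^ 2 / b ^ 2 ≤ 1}).toReal = π * a * b := by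
    rw [hEvol, ENNReal.toReal_mul, ENNReal.toReal_mul, ENNReal.toReal_ofReal ha.le,
      ENNReal.toReal_ofReal hb.le, ENNReal.toReal_ofReal Real.pi_pos.le]
    ring
  refine ⟨hw1, ?_, hvol, ?_⟩
  · -- the infimum of the width products
    refine IsLeast.csInf_eq ⟨⟨0, ⟨le_refl 0, by positivity⟩, ?_⟩, ?_⟩
    · dsimp only
      rw [hw1 0, hw2 0]
      simp only [Real.cos_zero, Real.sin_zero]
      rw [show a ^ 2 * 1 ^ 2 + b ^ 2 * 0 ^ 2 = a ^ 2 by ring,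
        show a ^ 2 * 0 ^ 2 + b ^ 2 * 1 ^ 2 = b ^ 2 by ring,
        Real.sqrt_sq ha.le, Real.sqrt_sq hb.le]
      ring
    · rintro x ⟨t, _, rfl⟩
      dsimp only
      rw [hw1 t, hw2 t]
      have hpyth := Real.sin_sq_add_cos_sq t
      have prod_eq : (a ^ 2 * cos t ^ 2 + b ^ 2 * sin t ^ 2) *
          (a ^ 2 * sin t ^ 2 + b ^ 2 * cos t ^ 2)
          = (a * b) ^ 2 + (a ^ 2 - b ^ 2) ^ 2 * (cos t * sin t) ^ 2 := by
        linear_combination (a ^ 2 * b ^ 2 * (Real.sin t ^ 2 + Real.cos t ^ 2 + 1)) * hpyth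
      have key : a * b ≤ Real.sqrt (a ^ 2 * cos t ^ 2 + b ^ 2 * sin t ^ 2) *
          Real.sqrt (a ^ 2 * sin t ^ 2 + b ^ 2 * cos t ^ 2) := by
        rw [← Real.sqrt_mul (by positivity)]
        have hle : (a * b) ^ 2 ≤ (a ^ 2 * cos t ^ 2 + b ^ 2 * sin t ^ 2) *
            (a ^ 2 * sin t ^ 2 + b ^ 2 * cos t ^ 2) := by
          rw [prod_eq]
          nlinarith [mul_nonneg (sq_nonneg (a ^ 2 - b ^ 2)) (sq_nonneg (cos t * sin t))]
        calc a * b = Real.sqrt ((a * b) ^ 2) := (Real.sqrt_sq (by positivity)).symm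
          _ ≤ _ := Real.sqrt_le_sqrt hle
      nlinarith [key]
  · rw [hvol]
    field_simp
end
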